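/- arXiv:1810.01116 — 7 statements merged into one kernel-verified Lean document; each statement's English description precedes it below -/
import Mathlib

section
/- (Lemma 1, change of variables) For every σ > 0 and every Borel measurable function g : ℝ → [0,∞], one has ∫₀^∞ g(φ_σ(x)) · f_IG(x|σ,σ) · ((1+x)/2) dx = ∫_ℝ g(z) · φ(z) dz, where φ(z) = exp(−z²/2)/√(2π) is the standard normal density. Equivalently, the pushforward under φ_σ of the measure on (0,∞) with density f_IG(x|σ,σ)·(1+x)/2 is the standard Gaussian measure on ℝ. -/
open MeasureTheory Real Set

/-- Inverse Gaussian density `f_IG(x | γ, δ)`. -/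
noncomputable def fIG (γ δ x : ℝ) : ℝ :=
  δ / Real.sqrt (2 * Real.pi * x ^ 3) * Real.exp (-(γ * x - δ) ^ 2 / (2 * x))

/-- The map `φ_σ(x) = σ (√x − 1/√x)`. -/
noncomputable def phiMap (σ x : ℝ) : ℝ := σ * (Real.sqrt x - 1 / Real.sqrt x)

/-- The inverse map `φ_σ⁻¹(z) = 1 + z²/(2σ²) + (z/σ)√(1 + z²/(4σ²))`. -/
noncomputable def phiInv (σ z : ℝ) : ℝ :=
  1 + z ^ 2 / (2 * σ ^ 2) + z / σ * Real.sqrt (1 + z ^ 2 / (4 * σ ^ 2))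

/-- Standard normal density `φ(z) = exp(−z²/2)/√(2π)`. -/
noncomputable def stdNormalPdf (z : ℝ) : ℝ := Real.exp (-z ^ 2 / 2) / Real.sqrt (2 * Real.pi)

/-- Standard normal cumulative distribution function. -/
noncomputable def stdNormalCDF (z : ℝ) : ℝ := ∫ t in Set.Iic z, stdNormalPdf t

/-- Modified Bessel function of the second kind `K_p(z)` (integral representation). -/
noncomputable def besselK (p z : ℝ) : ℝ :=
  (1 / 2) * ∫ t in Set.Ioi (0 : ℝ), t ^ (p - 1) * Real.exp (-z * (t + 1 / t) / 2)

/-- Generalized inverse Gaussian density `f_GIG(x | γ, δ, p)`. -/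
noncomputable def fGIG (γ δ p x : ℝ) : ℝ :=
  (γ / δ) ^ p * x ^ (p - 1) / (2 * besselK p (γ * δ)) *
    Real.exp (-(γ ^ 2 * x + δ ^ 2 / x) / 2)

/-- Generalized hyperbolic density `f_GH(y | μ, β, γ, δ, p)` with `α = √(β² + γ²)`. -/
noncomputable def fGH (μ β γ δ p y : ℝ) : ℝ :=
  Real.sqrt (Real.sqrt (β ^ 2 + γ ^ 2)) *
      (γ / (Real.sqrt (β ^ 2 + γ ^ 2) * δ)) ^ p /
      (Real.sqrt (2 * Real.pi) * besselK p (δ * γ)) *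
    Real.exp (β * (y - μ)) *
    besselK (p - 1 / 2) (Real.sqrt (β ^ 2 + γ ^ 2) * Real.sqrt (δ ^ 2 + (y - μ) ^ 2)) /
    (δ ^ 2 + (y - μ) ^ 2) ^ ((1 - 2 * p) / 4)

/-- one-variable lintegral change of variables -/
theorem my_lintegral_image {s : Set ℝ} {f f' : ℝ → ℝ}
    (hs : MeasurableSet s) (hf' : ∀ x ∈ s, HasDerivWithinAt f (f' x) s x)
    (hf : InjOn f s) (g : ℝ → ENNReal) :
    ∫⁻ x in f '' s, g x = ∫⁻ x in s, ENNReal.ofReal |f' x| * g (f x) := by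
  simpa only [ContinuousLinearMap.det_toSpanSingleton] using
    lintegral_image_eq_lintegral_abs_det_fderiv_mul volume hs
      (fun x hx => (hf' x hx).hasFDerivWithinAt) hf g

/-- Lemma 1, change of variables: for every Borel measurable
`g : ℝ → [0,∞]`, `∫₀^∞ g(φ_σ(x)) f_IG(x|σ,σ) (1+x)/2 dx = ∫_ℝ g(z) φ(z) dz`. -/
theorem ig_change_of_variables (σ : ℝ) (hσ : 0 < σ) (g : ℝ → ENNReal)
    (hg : Measurable g) :
    ∫⁻ x in Set.Ioi (0 : ℝ), g (phiMap σ x) * ENNReal.ofReal (fIG σ σ x * ((1 + x) / 2)) =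
    ∫⁻ z, g z * ENNReal.ofReal (stdNormalPdf z) := by
  set f' : ℝ → ℝ := fun x => σ * (1 / (2 * Real.sqrt x) + 1 / (2 * Real.sqrt x * x)) with hf'def
  -- derivative
  have hderiv : ∀ x ∈ Ioi (0:ℝ), HasDerivWithinAt (phiMap σ) (f' x) (Ioi 0) x := by
    intro x hx
    have hx0 : (0:ℝ) < x := hx
    have hr : 0 < Real.sqrt x := Real.sqrt_pos.mpr hx0
    have h1 : HasDerivAt Real.sqrt (1 / (2 * Real.sqrt x)) x := Real.hasDerivAt_sqrt hx0.ne'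
    have h2 : HasDerivAt (fun y => (1:ℝ) / Real.sqrt y)
        ((0 * Real.sqrt x - 1 * (1 / (2 * Real.sqrt x))) / (Real.sqrt x) ^ 2) x :=
      (hasDerivAt_const x (1:ℝ)).div h1 hr.ne'
    have h3 := ((h1.sub h2).const_mul σ)
    have heq : σ * (1 / (2 * Real.sqrt x) -
        (0 * Real.sqrt x - 1 * (1 / (2 * Real.sqrt x))) / (Real.sqrt x) ^ 2) = f' x := by
      have hr2 : Real.sqrt x ^ 2 = x := Real.sq_sqrt hx0.le
      field_simp [hf'def]
      simp only [hf'def]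
      field_simp
      simp only [hr2]
      ring
    rw [heq] at h3
    exact (h3.hasDerivWithinAt).congr (fun y _ => rfl) rfl
  -- injective
  have hinj : InjOn (phiMap σ) (Ioi 0) := by
    have hmono : StrictMonoOn (phiMap σ) (Ioi 0) := by
      intro x hx y hy hxy
      have hrx : 0 < Real.sqrt x := Real.sqrt_pos.mpr hx
      have hry : 0 < Real.sqrt y := Real.sqrt_pos.mpr hy
      have h1 : Real.sqrt x < Real.sqrt y := Real.sqrt_lt_sqrt (le_of_lt hx) hxy
      have h2 : 1 / Real.sqrt y < 1 / Real.sqrt x := one_div_lt_one_div_of_lt hrx h1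
      unfold phiMap
      have := sub_lt_sub h1 h2
      nlinarith
    exact hmono.injOn
  -- surjective image
  have himg : phiMap σ '' Ioi 0 = univ := by
    apply Set.eq_univ_of_forall
    intro z
    set a : ℝ := z / (2 * σ) with ha
    set s : ℝ := Real.sqrt (1 + a ^ 2) with hs
    have hs2 : s ^ 2 = 1 + a ^ 2 := Real.sq_sqrt (by positivity)
    have hsa : |a| < s := by
      have : Real.sqrt (a ^ 2) < s := by
        apply Real.sqrt_lt_sqrt (by positivity); linarith
      rwa [Real.sqrt_sq_eq_abs] at this
    have hu : 0 < a + s := by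
      cases abs_lt.mp hsa with
      | intro h1 h2 => linarith
    refine ⟨(a + s) ^ 2, pow_pos hu 2, ?_⟩
    unfold phiMap
    rw [Real.sqrt_sq hu.le]
    have hz : z = 2 * a * σ := by rw [ha]; field_simp
    field_simp
    nlinarith [hs2, hu]
  have key := my_lintegral_image (f := phiMap σ) (f' := f') measurableSet_Ioi hderiv hinj
    (fun z => g z * ENNReal.ofReal (stdNormalPdf z))
  rw [himg, Measure.restrict_univ] at key
  rw [key]
  apply setLIntegral_congr_fun measurableSet_Ioi
  intro x hx
  have hx0 : (0:ℝ) < x := hx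
  have hr : 0 < Real.sqrt x := Real.sqrt_pos.mpr hx0
  have hr2 : Real.sqrt x ^ 2 = x := Real.sq_sqrt hx0.le
  have hf'pos : 0 < f' x := by
    rw [hf'def]; positivity
  have hkey : fIG σ σ x * ((1 + x) / 2) = |f' x| * stdNormalPdf (phiMap σ x) := by
    rw [abs_of_pos hf'pos]
    unfold fIG stdNormalPdf phiMap
    have hexp : -(σ * x - σ) ^ 2 / (2 * x) = -(σ * (Real.sqrt x - 1 / Real.sqrt x)) ^ 2 / 2 := by
      rw [← hr2]; field_simp; simp only [Real.sqrt_sq hr.le]; ring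
    rw [← hexp]
    have hsq : Real.sqrt (2 * Real.pi * x ^ 3) = Real.sqrt (2 * Real.pi) * (x * Real.sqrt x) := by
      rw [show (2*Real.pi*x^3) = (2*Real.pi)*(x*Real.sqrt x)^2 by rw [mul_pow, hr2]; ring,
        Real.sqrt_mul (by positivity), Real.sqrt_sq (by positivity)]
    rw [hsq]
    have h2pi : 0 < Real.sqrt (2 * Real.pi) := Real.sqrt_pos.mpr (by positivity)
    rw [hf'def]
    field_simp
    ring
  beta_reduce
  rw [hkey, ENNReal.ofReal_mul (abs_nonneg _)]
  ring
end

section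
/- (Chi-squared property) For every σ > 0 and every z ≥ 0, ∫_{φ_σ⁻¹(−z)}^{φ_σ⁻¹(z)} f_IG(x|σ,σ) dx = ∫_{−z}^{z} φ(t) dt, where φ(t) = exp(−t²/2)/√(2π). Equivalently, if X is distributed with density f_IG(·|σ,σ), then the random variable φ_σ(X)² = σ²(X−1)²/X has the chi-squared distribution with one degree of freedom, i.e., the pushforward of the IG(σ,σ) measure under x ↦ σ²(x−1)²/x is the Gamma distribution with shape 1/2 and rate 1/2. -/
open MeasureTheory Real Set

noncomputable def sAux (σ t : ℝ) : ℝ := t / (2 * σ) + Real.sqrt (1 + t ^ 2 / (4 * σ ^ 2))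

lemma sqB (σ t : ℝ) (hσ : 0 < σ) :
    (Real.sqrt (1 + t ^ 2 / (4 * σ ^ 2))) ^ 2 = 1 + t ^ 2 / (4 * σ ^ 2) :=
  Real.sq_sqrt (by positivity)

lemma sAux_pos (σ t : ℝ) (hσ : 0 < σ) : 0 < sAux σ t := by
  have hb := sqB σ t hσ
  have hbnn : 0 ≤ Real.sqrt (1 + t ^ 2 / (4 * σ ^ 2)) := Real.sqrt_nonneg _
  unfold sAux
  have habs : |t / (2 * σ)| < Real.sqrt (1 + t ^ 2 / (4 * σ ^ 2)) := by
    rw [Real.lt_sqrt (abs_nonneg _), sq_abs]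
    have : (t / (2 * σ)) ^ 2 = t ^ 2 / (4 * σ ^ 2) := by ring
    linarith
  have := neg_abs_le (t / (2 * σ))
  linarith

lemma phiInv_eq_sq (σ t : ℝ) (hσ : 0 < σ) : phiInv σ t = (sAux σ t) ^ 2 := by
  have hb := sqB σ t hσ
  unfold phiInv sAux
  have hσ' : σ ≠ 0 := hσ.ne'
  linear_combination -hb

lemma phiInv_pos (σ t : ℝ) (hσ : 0 < σ) : 0 < phiInv σ t := by
  rw [phiInv_eq_sq σ t hσ]; exact pow_pos (sAux_pos σ t hσ) 2

lemma sAux_mul (σ t : ℝ) (hσ : 0 < σ) : sAux σ (-t) * sAux σ t = 1 := by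
  have hb := sqB σ t hσ
  unfold sAux
  rw [show (-t) ^ 2 = t ^ 2 by ring]
  set b := Real.sqrt (1 + t ^ 2 / (4 * σ ^ 2)) with hbdef
  linear_combination hb

lemma phiInv_neg (σ t : ℝ) (hσ : 0 < σ) : phiInv σ (-t) * phiInv σ t = 1 := by
  rw [phiInv_eq_sq σ _ hσ, phiInv_eq_sq σ _ hσ]
  have h := sAux_mul σ t hσ
  linear_combination (sAux σ (-t) * sAux σ t + 1) * h

lemma sqrt_phiInv (σ t : ℝ) (hσ : 0 < σ) : Real.sqrt (phiInv σ t) = sAux σ t := by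
  rw [phiInv_eq_sq σ t hσ, Real.sqrt_sq (sAux_pos σ t hσ).le]

lemma sAux_sq_sub_one (σ t : ℝ) (hσ : 0 < σ) : (sAux σ t) ^ 2 - 1 = sAux σ t * (t / σ) := by
  have hb := sqB σ t hσ
  unfold sAux
  set b := Real.sqrt (1 + t ^ 2 / (4 * σ ^ 2)) with hbdef
  linear_combination hb

lemma phiMap_phiInv (σ t : ℝ) (hσ : 0 < σ) : phiMap σ (phiInv σ t) = t := by
  have hs := sAux_pos σ t hσ
  have h := sAux_sq_sub_one σ t hσ
  have hσ' : σ ≠ 0 := hσ.ne'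
  unfold phiMap
  rw [sqrt_phiInv σ t hσ]
  have h2 : σ * (sAux σ t ^ 2 - 1) = sAux σ t * t := by rw [h]; field_simp
  field_simp
  linear_combination h2

lemma fIG_contOn (γ δ : ℝ) : ContinuousOn (fIG γ δ) (Set.Ioi 0) := by
  unfold fIG
  apply ContinuousOn.mul
  · apply ContinuousOn.div continuousOn_const
    · exact (Real.continuous_sqrt.comp (by continuity)).continuousOn
    · intro x hx
      have hx' : (0:ℝ) < x := hx
      exact (Real.sqrt_pos.mpr (by positivity)).ne'
  · apply Real.continuous_exp.comp_continuousOn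
    apply ContinuousOn.div (by fun_prop) (by fun_prop)
    intro x hx
    have hx' : (0:ℝ) < x := hx
    positivity

lemma stdNormalPdf_cont : Continuous stdNormalPdf :=
  (Real.continuous_exp.comp (by continuity)).div_const _

lemma phiMap_hasDeriv (σ x : ℝ) (hx : 0 < x) :
    HasDerivAt (phiMap σ) (σ * (1 / (2 * Real.sqrt x) + 1 / (2 * x * Real.sqrt x))) x := by
  have hrpos : 0 < Real.sqrt x := Real.sqrt_pos.mpr hx
  have hr : Real.sqrt x ≠ 0 := hrpos.ne'
  have hr2 : Real.sqrt x ^ 2 = x := Real.sq_sqrt hx.le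
  have h1 := Real.hasDerivAt_sqrt hx.ne'
  have h2 : HasDerivAt (fun y => 1 / Real.sqrt y)
      (-(1 / (2 * Real.sqrt x)) / Real.sqrt x ^ 2) x := by
    simpa [one_div, Pi.inv_def] using h1.inv hr
  have h3 := (h1.sub h2).const_mul σ
  refine h3.congr_deriv ?_
  rw [hr2]
  field_simp
  ring

lemma key_identity (σ x : ℝ) (hσ : 0 < σ) (hx : 0 < x) :
    (x ^ 2)⁻¹ * fIG σ σ x⁻¹ + fIG σ σ x
      = (σ * (1 / (2 * Real.sqrt x) + 1 / (2 * x * Real.sqrt x))) * (2 * stdNormalPdf (phiMap σ x)) := by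
  set r := Real.sqrt x with hrdef
  have hrpos : 0 < r := Real.sqrt_pos.mpr hx
  have hr : r ≠ 0 := hrpos.ne'
  have hr2 : r ^ 2 = x := Real.sq_sqrt hx.le
  have hc : 0 < Real.sqrt (2 * Real.pi) := Real.sqrt_pos.mpr (by positivity)
  have s1 : Real.sqrt (2 * Real.pi * x ^ 3) = Real.sqrt (2 * Real.pi) * r ^ 3 := by
    rw [← hr2, show 2 * Real.pi * (r ^ 2) ^ 3 = (2 * Real.pi) * (r ^ 3) ^ 2 by ring,
      Real.sqrt_mul (by positivity), Real.sqrt_sq (by positivity)]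
  have s2 : Real.sqrt (2 * Real.pi * (x⁻¹) ^ 3) = Real.sqrt (2 * Real.pi) * (r ^ 3)⁻¹ := by
    rw [← hr2, show 2 * Real.pi * ((r ^ 2)⁻¹) ^ 3 = (2 * Real.pi) * ((r ^ 3)⁻¹) ^ 2 by ring,
      Real.sqrt_mul (by positivity), Real.sqrt_sq (by positivity)]
  have e1 : -(σ * x - σ) ^ 2 / (2 * x) = -(σ * (r - 1 / r)) ^ 2 / 2 := by
    rw [← hr2]; field_simp
  have e2 : -(σ * x⁻¹ - σ) ^ 2 / (2 * x⁻¹) = -(σ * (r - 1 / r)) ^ 2 / 2 := by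
    rw [← hr2]; field_simp; ring
  have e3 : -(phiMap σ x) ^ 2 / 2 = -(σ * (r - 1 / r)) ^ 2 / 2 := by
    unfold phiMap; rw [← hrdef]
  unfold fIG stdNormalPdf
  rw [s1, s2, e1, e2, e3, ← hr2]
  have hE : 0 < Real.exp (-(σ * (r - 1 / r)) ^ 2 / 2) := Real.exp_pos _
  field_simp

/-- chi-squared property: for `z ≥ 0`,
`∫_{φ_σ⁻¹(−z)}^{φ_σ⁻¹(z)} f_IG(x|σ,σ) dx = ∫_{−z}^{z} φ(t) dt`. -/
theorem ig_chi_squared (σ : ℝ) (hσ : 0 < σ) (z : ℝ) (hz : 0 ≤ z) :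
    ∫ x in (phiInv σ (-z))..(phiInv σ z), fIG σ σ x = ∫ t in (-z)..z, stdNormalPdf t := by
  set xp := phiInv σ z with hxpdef
  have hxp1 : 1 ≤ xp := by
    rw [hxpdef]; unfold phiInv
    have h1 : 0 ≤ z ^ 2 / (2 * σ ^ 2) := by positivity
    have h2 : 0 ≤ z / σ * Real.sqrt (1 + z ^ 2 / (4 * σ ^ 2)) := by positivity
    linarith
  have hxpp : 0 < xp := lt_of_lt_of_le one_pos hxp1
  have hxm : phiInv σ (-z) = xp⁻¹ := eq_inv_of_mul_eq_one_left (phiInv_neg σ z hσ)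
  have hxmp : 0 < xp⁻¹ := by positivity
  have hxm1 : xp⁻¹ ≤ 1 := by
    nlinarith [mul_inv_cancel₀ hxpp.ne']
  have hcont := fIG_contOn σ σ
  have hsub1 : Set.uIcc xp⁻¹ 1 ⊆ Set.Ioi 0 := by
    rw [Set.uIcc_of_le hxm1]
    exact fun y hy => lt_of_lt_of_le hxmp hy.1
  have hsub2 : Set.uIcc 1 xp ⊆ Set.Ioi 0 := by
    rw [Set.uIcc_of_le hxp1]
    exact fun y hy => lt_of_lt_of_le one_pos hy.1
  have hint1 : IntervalIntegrable (fIG σ σ) volume xp⁻¹ 1 :=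
    (hcont.mono hsub1).intervalIntegrable
  have hint2 : IntervalIntegrable (fIG σ σ) volume 1 xp :=
    (hcont.mono hsub2).intervalIntegrable
  -- substitution u ↦ u⁻¹ on the left piece
  have hder1 : ∀ u ∈ Set.uIcc (1:ℝ) xp, HasDerivAt (fun y : ℝ => y⁻¹) (-((u ^ 2)⁻¹)) u := by
    intro u hu
    have hu0 : (0:ℝ) < u := hsub2 hu
    simpa using hasDerivAt_inv hu0.ne'
  have hcont1 : ContinuousOn (fun u : ℝ => -((u ^ 2)⁻¹)) (Set.uIcc (1:ℝ) xp) := by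
    apply ContinuousOn.neg
    apply ContinuousOn.inv₀ (by fun_prop)
    intro u hu
    have hu0 : (0:ℝ) < u := hsub2 hu
    positivity
  have himg : ContinuousOn (fIG σ σ) ((fun y : ℝ => y⁻¹) '' Set.uIcc (1:ℝ) xp) := by
    apply hcont.mono
    rintro y ⟨u, hu, rfl⟩
    exact inv_pos.mpr (show (0:ℝ) < u from hsub2 hu)
  have hstep1 : ∫ u in (1:ℝ)..xp, (-((u ^ 2)⁻¹)) • (fIG σ σ ∘ fun y : ℝ => y⁻¹) u =
      ∫ x in ((1:ℝ)⁻¹)..xp⁻¹, fIG σ σ x :=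
    intervalIntegral.integral_comp_smul_deriv' hder1 hcont1 himg
  rw [inv_one] at hstep1
  have hpiece1 : ∫ x in phiInv σ (-z)..(1:ℝ), fIG σ σ x
      = ∫ u in (1:ℝ)..xp, (u ^ 2)⁻¹ * fIG σ σ u⁻¹ := by
    rw [hxm, intervalIntegral.integral_symm, ← hstep1]
    rw [← intervalIntegral.integral_neg]
    congr 1
    ext u
    simp [smul_eq_mul]
  -- substitution via phiMap on the combined integrand
  have hder2 : ∀ u ∈ Set.uIcc (1:ℝ) xp, HasDerivAt (phiMap σ)
      (σ * (1 / (2 * Real.sqrt u) + 1 / (2 * u * Real.sqrt u))) u :=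
    fun u hu => phiMap_hasDeriv σ u (hsub2 hu)
  have hcont2 : ContinuousOn
      (fun u => σ * (1 / (2 * Real.sqrt u) + 1 / (2 * u * Real.sqrt u)))
      (Set.uIcc (1:ℝ) xp) := by
    apply ContinuousOn.mul continuousOn_const
    apply ContinuousOn.add
    · apply ContinuousOn.div continuousOn_const (by fun_prop)
      intro u hu
      have hu0 : (0:ℝ) < u := hsub2 hu
      have h1 : 0 < Real.sqrt u := Real.sqrt_pos.mpr hu0
      exact mul_ne_zero two_ne_zero h1.ne'
    · apply ContinuousOn.div continuousOn_const (by fun_prop)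
      intro u hu
      have hu0 : (0:ℝ) < u := hsub2 hu
      have h1 : 0 < Real.sqrt u := Real.sqrt_pos.mpr hu0
      exact mul_ne_zero (mul_ne_zero two_ne_zero hu0.ne') h1.ne'
  have hstep2 : ∫ u in (1:ℝ)..xp,
      (σ * (1 / (2 * Real.sqrt u) + 1 / (2 * u * Real.sqrt u))) •
        ((fun t => 2 * stdNormalPdf t) ∘ phiMap σ) u
      = ∫ t in (phiMap σ 1)..(phiMap σ xp), 2 * stdNormalPdf t :=
    intervalIntegral.integral_comp_smul_deriv hder2 hcont2
      (continuous_const.mul stdNormalPdf_cont)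
  have hphi1 : phiMap σ 1 = 0 := by unfold phiMap; rw [Real.sqrt_one]; ring
  have hphixp : phiMap σ xp = z := phiMap_phiInv σ z hσ
  rw [hphi1, hphixp] at hstep2
  -- integrability of the inverted piece
  have hint3 : IntervalIntegrable (fun u : ℝ => (u ^ 2)⁻¹ * fIG σ σ u⁻¹) volume 1 xp := by
    apply ContinuousOn.intervalIntegrable
    apply ContinuousOn.mul
    · apply ContinuousOn.inv₀ (by fun_prop)
      intro u hu
      have hu0 : (0:ℝ) < u := hsub2 hu
      positivity
    · apply hcont.comp (f := fun y : ℝ => y⁻¹)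
      · exact continuousOn_id.inv₀ fun u hu => (hsub2 hu).ne'
      · exact fun u hu => show (0:ℝ) < u⁻¹ from inv_pos.mpr (show (0:ℝ) < u from hsub2 hu)
  -- assemble
  have hint1' : IntervalIntegrable (fIG σ σ) volume (phiInv σ (-z)) 1 := by
    rw [hxm]; exact hint1
  calc ∫ x in phiInv σ (-z)..xp, fIG σ σ x
      = (∫ x in phiInv σ (-z)..(1:ℝ), fIG σ σ x) + ∫ x in (1:ℝ)..xp, fIG σ σ x :=
        (intervalIntegral.integral_add_adjacent_intervals hint1' hint2).symm
    _ = ∫ u in (1:ℝ)..xp, ((u ^ 2)⁻¹ * fIG σ σ u⁻¹ + fIG σ σ u) := by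
        rw [hpiece1, ← intervalIntegral.integral_add hint3 hint2]
    _ = ∫ u in (1:ℝ)..xp,
          (σ * (1 / (2 * Real.sqrt u) + 1 / (2 * u * Real.sqrt u))) •
            ((fun t => 2 * stdNormalPdf t) ∘ phiMap σ) u := by
        apply intervalIntegral.integral_congr
        intro u hu
        have hu0 : (0:ℝ) < u := hsub2 hu
        simpa [smul_eq_mul] using key_identity σ u hσ hu0
    _ = ∫ t in (0:ℝ)..z, 2 * stdNormalPdf t := hstep2
    _ = ∫ t in (-z)..z, stdNormalPdf t := by
        have hi : IntervalIntegrable stdNormalPdf volume (-z) 0 :=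
          stdNormalPdf_cont.intervalIntegrable _ _
        have hi2 : IntervalIntegrable stdNormalPdf volume 0 z :=
          stdNormalPdf_cont.intervalIntegrable _ _
        rw [← intervalIntegral.integral_add_adjacent_intervals hi hi2]
        have hneg : ∫ t in (-z)..(0:ℝ), stdNormalPdf t = ∫ t in (0:ℝ)..z, stdNormalPdf t := by
          have h := intervalIntegral.integral_comp_neg (a := (0:ℝ)) (b := z) (f := stdNormalPdf)
          simp only [neg_zero] at h
          rw [← h]
          apply intervalIntegral.integral_congr
          intro t _
          simp [stdNormalPdf, neg_sq]
        rw [hneg]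
        rw [show (fun t => 2 * stdNormalPdf t) = fun t => (2:ℝ) * stdNormalPdf t from rfl]
        rw [intervalIntegral.integral_const_mul]
        ring
end

section
/- (Two-valued inversion density identity) For every σ > 0 and every z ∈ ℝ, writing x₊ = φ_σ⁻¹(z) and x₋ = φ_σ⁻¹(−z), one has f_IG(x₊|σ,σ)/φ_σ'(x₊) + f_IG(x₋|σ,σ)/φ_σ'(x₋) = 2·φ(z), where φ_σ'(x) = σ(1+x)/(2x^{3/2}) and φ(z) = exp(−z²/2)/√(2π). In particular the selection probabilities p₊ = 1/(1+x₊) and p₋ = 1/(1+x₋) satisfy p₊ + p₋ = 1. -/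
open MeasureTheory Real Set

lemma aux_sqrt_add_pos (u : ℝ) : 0 < Real.sqrt (1 + u ^ 2) + u := by
  have hr2 : Real.sqrt (1 + u ^ 2) ^ 2 = 1 + u ^ 2 := Real.sq_sqrt (by positivity)
  have hrpos : 0 < Real.sqrt (1 + u ^ 2) := Real.sqrt_pos.mpr (by positivity)
  rcases le_or_gt 0 u with h | h
  · linarith
  · nlinarith

lemma aux_phiInv_eq (σ : ℝ) (hσ : 0 < σ) (z : ℝ) :
    phiInv σ z = (Real.sqrt (1 + (z / (2 * σ)) ^ 2) + z / (2 * σ)) ^ 2 := by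
  have harg : 1 + z ^ 2 / (4 * σ ^ 2) = 1 + (z / (2 * σ)) ^ 2 := by
    field_simp; ring
  rw [phiInv, harg]
  set r := Real.sqrt (1 + (z / (2 * σ)) ^ 2) with hr
  have hr2 : r ^ 2 = 1 + (z / (2 * σ)) ^ 2 := Real.sq_sqrt (by positivity)
  have hr2' : 4 * σ ^ 2 * r ^ 2 = 4 * σ ^ 2 + z ^ 2 := by
    rw [hr2]; field_simp; ring
  field_simp
  linear_combination -hr2'

lemma aux_phiInv_neg (σ : ℝ) (hσ : 0 < σ) (z : ℝ) :
    phiInv σ (-z) = (Real.sqrt (1 + (z / (2 * σ)) ^ 2) - z / (2 * σ)) ^ 2 := by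
  rw [aux_phiInv_eq σ hσ (-z), show -z / (2 * σ) = -(z / (2 * σ)) by ring, neg_sq]
  ring

lemma aux_fIG_ratio (σ : ℝ) (hσ : 0 < σ) (z : ℝ) :
    fIG σ σ (phiInv σ z) / (σ * (1 + phiInv σ z) / (2 * phiInv σ z ^ ((3 : ℝ) / 2))) =
      2 * Real.exp (-z ^ 2 / 2) / (Real.sqrt (2 * Real.pi) * (1 + phiInv σ z)) := by
  set u := z / (2 * σ) with hu
  set r := Real.sqrt (1 + u ^ 2) with hr
  have hr2 : r ^ 2 = 1 + u ^ 2 := Real.sq_sqrt (by positivity)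
  have ht : 0 < r + u := aux_sqrt_add_pos u
  have hz : z = 2 * σ * u := by rw [hu]; field_simp
  have hx : phiInv σ z = (r + u) ^ 2 := aux_phiInv_eq σ hσ z
  rw [hx, fIG]
  have h1 : Real.sqrt (2 * Real.pi * ((r + u) ^ 2) ^ 3) =
      Real.sqrt (2 * Real.pi) * (r + u) ^ 3 := by
    rw [show ((r + u) ^ 2) ^ 3 = ((r + u) ^ 3) ^ 2 by ring,
      Real.sqrt_mul (by positivity), Real.sqrt_sq (by positivity)]
  have h2 : (((r + u) ^ 2 : ℝ)) ^ ((3 : ℝ) / 2) = (r + u) ^ 3 := by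
    rw [← Real.rpow_natCast (r + u) 2, ← Real.rpow_mul ht.le,
      show ((2 : ℕ) : ℝ) * ((3 : ℝ) / 2) = ((3 : ℕ) : ℝ) by norm_num,
      Real.rpow_natCast]
  have h3 : -(σ * (r + u) ^ 2 - σ) ^ 2 / (2 * (r + u) ^ 2) = -z ^ 2 / 2 := by
    have hlin : σ * (r + u) ^ 2 - σ = z * (r + u) := by
      rw [hz]; linear_combination σ * hr2
    rw [hlin]
    field_simp
  rw [h1, h2, h3]
  have h1x : 0 < 1 + (r + u) ^ 2 := by positivity
  have hs : 0 < Real.sqrt (2 * Real.pi) := Real.sqrt_pos.mpr (by positivity)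
  field_simp

lemma aux_phiInv_mul (σ : ℝ) (hσ : 0 < σ) (z : ℝ) :
    phiInv σ z * phiInv σ (-z) = 1 := by
  rw [aux_phiInv_eq σ hσ z, aux_phiInv_neg σ hσ z]
  set u := z / (2 * σ) with hu
  set r := Real.sqrt (1 + u ^ 2) with hr
  have hr2 : r ^ 2 = 1 + u ^ 2 := Real.sq_sqrt (by positivity)
  nlinarith [hr2]

lemma aux_phiInv_pos (σ : ℝ) (hσ : 0 < σ) (z : ℝ) : 0 < phiInv σ z := by
  rw [aux_phiInv_eq σ hσ z]
  exact pow_pos (aux_sqrt_add_pos _) 2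

/-- two-valued inversion density identity:
`f_IG(x₊|σ,σ)/φ_σ'(x₊) + f_IG(x₋|σ,σ)/φ_σ'(x₋) = 2 φ(z)` with
`φ_σ'(x) = σ(1+x)/(2 x^{3/2})`, and `1/(1+x₊) + 1/(1+x₋) = 1`. -/
theorem ig_two_valued_inversion (σ : ℝ) (hσ : 0 < σ) (z : ℝ) :
    fIG σ σ (phiInv σ z) / (σ * (1 + phiInv σ z) / (2 * phiInv σ z ^ ((3 : ℝ) / 2))) +
      fIG σ σ (phiInv σ (-z)) /
        (σ * (1 + phiInv σ (-z)) / (2 * phiInv σ (-z) ^ ((3 : ℝ) / 2))) =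
      2 * stdNormalPdf z ∧
    1 / (1 + phiInv σ z) + 1 / (1 + phiInv σ (-z)) = 1 := by
  have hx : 0 < phiInv σ z := aux_phiInv_pos σ hσ z
  have hy : 0 < phiInv σ (-z) := aux_phiInv_pos σ hσ (-z)
  have hxy : phiInv σ z * phiInv σ (-z) = 1 := aux_phiInv_mul σ hσ z
  have h1x : (1 + phiInv σ z) ≠ 0 := by positivity
  have h1y : (1 + phiInv σ (-z)) ≠ 0 := by positivity
  have hpsum : 1 / (1 + phiInv σ z) + 1 / (1 + phiInv σ (-z)) = 1 := by
    field_simp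
    linear_combination -hxy
  refine ⟨?_, hpsum⟩
  rw [aux_fIG_ratio σ hσ z, aux_fIG_ratio σ hσ (-z),
    show (-z) ^ 2 = z ^ 2 by ring, stdNormalPdf]
  have hsplit : ∀ w : ℝ, 2 * Real.exp (-z ^ 2 / 2) / (Real.sqrt (2 * Real.pi) * (1 + w)) =
      2 * Real.exp (-z ^ 2 / 2) / Real.sqrt (2 * Real.pi) * (1 / (1 + w)) := by
    intro w; rw [div_mul_eq_div_div]; ring
  rw [hsplit, hsplit]
  have hfac : 2 * Real.exp (-z ^ 2 / 2) / Real.sqrt (2 * Real.pi) * (1 / (1 + phiInv σ z)) +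
      2 * Real.exp (-z ^ 2 / 2) / Real.sqrt (2 * Real.pi) * (1 / (1 + phiInv σ (-z))) =
      2 * Real.exp (-z ^ 2 / 2) / Real.sqrt (2 * Real.pi) *
        (1 / (1 + phiInv σ z) + 1 / (1 + phiInv σ (-z))) := by ring
  rw [hfac, hpsum, mul_one]
  ring
end

section
/- (Lemma 2, orthogonality) For every σ > 0 and all natural numbers n and m, the functions G_n(x) = He_n(φ_σ(x)) are orthogonal with respect to the weight f_IG(x|σ,σ)·(1+x)/2 on (0,∞): ∫₀^∞ He_n(φ_σ(x)) · He_m(φ_σ(x)) · f_IG(x|σ,σ) · ((1+x)/2) dx equals n! if n = m and equals 0 if n ≠ m. -/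
open MeasureTheory Real Set

open Polynomial Filter

namespace IGaux

lemma derivative_hermite (n : ℕ) :
    derivative (hermite (n + 1)) = C ((n : ℤ) + 1) * hermite n := by
  induction n with
  | zero => simp [hermite_one, hermite_zero]
  | succ n ih =>
    rw [hermite_succ (n + 1), derivative_sub, derivative_mul, derivative_X, one_mul, ih,
      derivative_mul, derivative_C, zero_mul, zero_add, hermite_succ n]
    push_cast
    simp only [C_add, C_1]
    ring

lemma iter_derivative_hermite_self (n : ℕ) :
    derivative^[n] (hermite n) = C (n.factorial : ℤ) := by
  induction n with
  | zero => simp [hermite_zero]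
  | succ n ih =>
    rw [Function.iterate_succ_apply, derivative_hermite, iterate_derivative_C_mul, ih,
      ← C_mul, Nat.factorial_succ]
    push_cast
    ring_nf

lemma iter_derivative_hermite_zero {n k : ℕ} (h : n < k) :
    derivative^[k] (hermite n) = 0 := by
  obtain ⟨j, rfl⟩ := Nat.exists_eq_add_of_le h
  have h1 : derivative^[n + 1] (hermite n) = 0 := by
    rw [Function.iterate_succ_apply', iter_derivative_hermite_self, derivative_C]
  rw [add_comm, Function.iterate_add_apply, h1]
  exact iterate_derivative_zero


/-- Real-coefficient Hermite polynomial. -/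
noncomputable def Hr (n : ℕ) : Polynomial ℝ := (hermite n).map (algebraMap ℤ ℝ)

/-- The Gaussian. -/
noncomputable def Gs (x : ℝ) : ℝ := Real.exp (-(x ^ 2 / 2))

lemma aeval_hermite_eq (n : ℕ) (x : ℝ) : aeval x (hermite n) = (Hr n).eval x := by
  rw [Hr, eval_map, aeval_def]

lemma integrable_pow_gauss (k : ℕ) :
    Integrable fun x : ℝ => x ^ k * Gs x := by
  have h := integrable_rpow_mul_exp_neg_mul_sq (b := (1/2 : ℝ)) (by norm_num)
    (s := (k : ℝ)) (lt_of_lt_of_le (by norm_num) (Nat.cast_nonneg k))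
  simp only [Real.rpow_natCast] at h
  refine h.congr (Filter.Eventually.of_forall fun x => ?_)
  simp only [Gs]
  ring_nf

lemma integrable_poly_gauss (p : Polynomial ℝ) :
    Integrable fun x : ℝ => p.eval x * Gs x := by
  have : (fun x : ℝ => p.eval x * Gs x) =
      fun x => ∑ i ∈ Finset.range (p.natDegree + 1), p.coeff i * (x ^ i * Gs x) := by
    funext x
    rw [eval_eq_sum_range, Finset.sum_mul]
    congr 1
    funext i
    ring
  rw [this]
  exact integrable_finset_sum _ fun i _ => (integrable_pow_gauss i).const_mul _

lemma iterDeriv_gauss (k : ℕ) :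
    deriv^[k] Gs = fun x => (-1 : ℝ) ^ k * (Hr k).eval x * Gs x := by
  funext x
  have := Polynomial.deriv_gaussian_eq_hermite_mul_gaussian k x
  rw [aeval_hermite_eq] at this
  exact this

lemma hasDerivAt_gauss (x : ℝ) : HasDerivAt Gs (-x * Gs x) x := by
  have h1 : HasDerivAt (fun y : ℝ => -(y ^ 2 / 2)) (-x) x := by
    simpa using (((hasDerivAt_pow 2 x).div_const 2).fun_neg)
  show HasDerivAt (fun x => Real.exp (-(x ^ 2 / 2))) _ x
  simpa [Gs, mul_comm] using h1.exp

lemma hasDerivAt_polyGauss (p : Polynomial ℝ) (x : ℝ) :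
    HasDerivAt (fun y => p.eval y * Gs y)
      (p.derivative.eval x * Gs x + p.eval x * (-x * Gs x)) x :=
  (p.hasDerivAt x).mul (hasDerivAt_gauss x)

lemma iterate_derivative_Hr (k n : ℕ) :
    derivative^[k] (Hr n) = (derivative^[k] (hermite n)).map (algebraMap ℤ ℝ) := by
  rw [Hr, iterate_derivative_map]

lemma derivative_Hr (n : ℕ) :
    derivative (Hr (n + 1)) = C ((n : ℝ) + 1) * Hr n := by
  rw [Hr, Polynomial.derivative_map, IGaux.derivative_hermite, Polynomial.map_mul, map_C]
  push_cast
  rfl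

lemma hasDerivAt_iterDeriv_gauss (k : ℕ) (x : ℝ) :
    HasDerivAt (deriv^[k] Gs) (deriv^[k + 1] Gs x) x := by
  rw [iterDeriv_gauss k, iterDeriv_gauss (k + 1)]
  have h := ((hasDerivAt_polyGauss (Hr k) x).const_mul ((-1 : ℝ) ^ k))
  have h2 : (fun x : ℝ => (-1 : ℝ) ^ k * eval x (Hr k) * Gs x)
      = fun y => (-1 : ℝ) ^ k * (eval y (Hr k) * Gs y) := by
    funext y; ring
  rw [h2]
  refine h.congr_deriv ?_
  have hsucc : Hr (k + 1) = X * Hr k - derivative (Hr k) := by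
    rw [Hr, hermite_succ, Polynomial.map_sub, Polynomial.map_mul, map_X, ← Polynomial.derivative_map]
    rfl
  rw [hsucc]
  simp only [eval_sub, eval_mul, eval_X]
  rw [pow_succ]
  ring

lemma parts_step (p : Polynomial ℝ) (k : ℕ) :
    ∫ x : ℝ, p.eval x * deriv^[k + 1] Gs x =
      - ∫ x : ℝ, p.derivative.eval x * deriv^[k] Gs x := by
  have hint : ∀ (q : Polynomial ℝ) (j : ℕ),
      Integrable ((fun x => q.eval x) * fun x => deriv^[j] Gs x) := by
    intro q j
    have : ((fun x => q.eval x) * fun x => deriv^[j] Gs x) =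
        fun x => (-1 : ℝ) ^ j * ((q * Hr j).eval x * Gs x) := by
      funext x
      rw [iterDeriv_gauss j]
      simp only [Pi.mul_apply, eval_mul]
      ring
    rw [this]
    exact (integrable_poly_gauss (q * Hr j)).const_mul _
  exact integral_mul_deriv_eq_deriv_mul_of_integrable
    (fun x _ => p.hasDerivAt x) (fun x _ => hasDerivAt_iterDeriv_gauss k x)
    (hint p (k + 1)) (hint p.derivative k) (hint p k)

lemma key_integral (p : Polynomial ℝ) (n : ℕ) :
    ∫ x : ℝ, p.eval x * deriv^[n] Gs x =
      (-1 : ℝ) ^ n * ∫ x : ℝ, (derivative^[n] p).eval x * Gs x := by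
  induction n generalizing p with
  | zero => simp
  | succ n ih =>
    rw [parts_step p n, ih p.derivative, ← Function.iterate_succ_apply, pow_succ]
    ring

lemma gauss_orth_aux {m n : ℕ} (h : m ≤ n) :
    ∫ x : ℝ, (Hr m).eval x * (Hr n).eval x * Gs x =
      (if n = m then (n.factorial : ℝ) else 0) * Real.sqrt (2 * Real.pi) := by
  have step1 : ∫ x : ℝ, (Hr m).eval x * (Hr n).eval x * Gs x =
      ∫ x : ℝ, (derivative^[n] (Hr m)).eval x * Gs x := by
    have e1 : (fun x : ℝ => (Hr m).eval x * (Hr n).eval x * Gs x) =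
        fun x => (-1 : ℝ) ^ n * ((Hr m).eval x * deriv^[n] Gs x) := by
      funext x
      rw [iterDeriv_gauss n]
      have hpow : ((-1 : ℝ)) ^ n * (-1) ^ n = 1 := by
        rw [← pow_add]; exact Even.neg_one_pow (Even.add_self n)
      simp only []
      linear_combination (-(eval x (Hr m) * eval x (Hr n) * Gs x)) * hpow
    rw [e1, integral_const_mul, key_integral, ← mul_assoc, ← pow_add,
      Even.neg_one_pow (Even.add_self n), one_mul]
  rw [step1]
  rcases eq_or_lt_of_le h with rfl | hlt
  · rw [iterate_derivative_Hr, IGaux.iter_derivative_hermite_self, if_pos rfl]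
    simp only [map_C]
    have : ∀ x : ℝ, (C ((algebraMap ℤ ℝ) (m.factorial : ℤ))).eval x * Gs x
        = (m.factorial : ℝ) * Gs x := by intro x; simp
    rw [MeasureTheory.integral_congr_ae (Filter.Eventually.of_forall this),
      integral_const_mul]
    have : ∫ x : ℝ, Gs x = Real.sqrt (2 * Real.pi) := by
      have h2 : ∫ x : ℝ, Real.exp (-(1/2 : ℝ) * x ^ 2) = Real.sqrt (Real.pi / (1/2)) :=
        integral_gaussian (1/2)
      have : (fun x : ℝ => Gs x) = fun x => Real.exp (-(1/2 : ℝ) * x ^ 2) := by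
        funext x; rw [Gs]; ring_nf
      rw [this, h2]
      congr 1
      ring
    rw [this]
  · rw [iterate_derivative_Hr, IGaux.iter_derivative_hermite_zero hlt, if_neg (by omega)]
    simp


lemma gauss_orth (n m : ℕ) :
    ∫ x : ℝ, (Hr n).eval x * (Hr m).eval x * Gs x =
      (if n = m then (n.factorial : ℝ) else 0) * Real.sqrt (2 * Real.pi) := by
  rcases le_total m n with h | h
  · have := gauss_orth_aux h
    rw [← this]
    apply MeasureTheory.integral_congr_ae (Filter.Eventually.of_forall fun x => ?_)
    ring
  · have := gauss_orth_aux h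
    rcases eq_or_ne n m with rfl | hne
    · simpa using this
    · rw [this, if_neg (fun hh => hne hh.symm), if_neg hne]

lemma phi_strictMono {σ : ℝ} (hσ : 0 < σ) : StrictMonoOn (phiMap σ) (Ioi 0) := by
  intro x hx y hy hxy
  have hx0 : (0:ℝ) < x := hx
  have hy0 : (0:ℝ) < y := hy
  have hsx : 0 < Real.sqrt x := Real.sqrt_pos.2 hx0
  have h1 : Real.sqrt x < Real.sqrt y := Real.sqrt_lt_sqrt hx0.le hxy
  have h2 : 1 / Real.sqrt y < 1 / Real.sqrt x := one_div_lt_one_div_of_lt hsx h1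
  have : Real.sqrt x - 1 / Real.sqrt x < Real.sqrt y - 1 / Real.sqrt y := by linarith
  exact mul_lt_mul_of_pos_left this hσ

lemma phi_image {σ : ℝ} (hσ : 0 < σ) : phiMap σ '' Ioi (0:ℝ) = univ := by
  refine eq_univ_of_forall fun z => ?_
  set s := Real.sqrt (1 + z ^ 2 / (4 * σ ^ 2)) with hsdef
  have hs2 : s ^ 2 = 1 + z ^ 2 / (4 * σ ^ 2) := Real.sq_sqrt (by positivity)
  have hσ0 : σ ≠ 0 := ne_of_gt hσ
  have h0 : 0 ≤ s := Real.sqrt_nonneg _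
  have hu : (z / (2 * σ)) ^ 2 < s ^ 2 := by
    rw [hs2]
    have he : (z / (2 * σ)) ^ 2 = z ^ 2 / (4 * σ ^ 2) := by
      rw [div_pow]
      congr 1
      ring
    rw [he]
    linarith
  have hsabs : |z / (2 * σ)| < s :=
    lt_of_pow_lt_pow_left₀ 2 h0 (by rw [sq_abs]; exact hu)
  have ht : 0 < s + z / (2 * σ) := by
    have := neg_abs_le (z / (2 * σ))
    linarith
  set t := s + z / (2 * σ) with htdef
  refine ⟨t ^ 2, mem_Ioi.2 (pow_pos ht 2), ?_⟩
  have hsq : Real.sqrt (t ^ 2) = t := Real.sqrt_sq ht.le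
  have htne : t ≠ 0 := ne_of_gt ht
  have hs2' : s ^ 2 = 1 + (z / (2 * σ)) ^ 2 := by
    rw [hs2]
    congr 1
    rw [div_pow]
    congr 1
    ring
  have htt : t ^ 2 = 1 + 2 * (z / (2 * σ)) * t := by
    rw [htdef]
    linear_combination hs2'
  have hdiv : t - 1 / t = 2 * (z / (2 * σ)) := by
    have hc : (t - 1 / t) * t = 2 * (z / (2 * σ)) * t := by
      have he2 : (t - 1 / t) * t = t ^ 2 - 1 := by
        field_simp [htne]
      rw [he2, htt]
      ring
    exact mul_right_cancel₀ htne hc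
  rw [phiMap, hsq, hdiv]
  field_simp

lemma phi_hasDeriv (σ : ℝ) {x : ℝ} (hx : 0 < x) :
    HasDerivAt (phiMap σ) (σ * ((1 + x) / (2 * x * Real.sqrt x))) x := by
  have hsx : 0 < Real.sqrt x := Real.sqrt_pos.2 hx
  have h1 : HasDerivAt Real.sqrt (1 / (2 * Real.sqrt x)) x := hasDerivAt_sqrt hx.ne'
  have h2 : HasDerivAt (fun y => 1 / Real.sqrt y)
      (-(1 / (2 * Real.sqrt x)) / (Real.sqrt x) ^ 2) x := by
    simpa [one_div] using h1.fun_inv hsx.ne'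
  have h3 := (h1.sub h2).const_mul σ
  have hxx : (Real.sqrt x) ^ 2 = x := Real.sq_sqrt hx.le
  have hphi : phiMap σ = fun y => σ * (Real.sqrt y - 1 / Real.sqrt y) := rfl
  rw [hphi]
  refine h3.congr_deriv ?_
  rw [hxx]
  field_simp
  ring

lemma weight_eq {σ : ℝ} (hσ : 0 < σ) {x : ℝ} (hx : 0 < x) :
    |σ * ((1 + x) / (2 * x * Real.sqrt x))| * (Gs (phiMap σ x) / Real.sqrt (2 * Real.pi))
      = fIG σ σ x * ((1 + x) / 2) := by
  have hsx : 0 < Real.sqrt x := Real.sqrt_pos.2 hx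
  have hxx : (Real.sqrt x) ^ 2 = x := Real.sq_sqrt hx.le
  have habs : |σ * ((1 + x) / (2 * x * Real.sqrt x))|
      = σ * ((1 + x) / (2 * x * Real.sqrt x)) := abs_of_pos (by positivity)
  have hexp : Gs (phiMap σ x) = Real.exp (-(σ * x - σ) ^ 2 / (2 * x)) := by
    rw [Gs, phiMap]
    congr 1
    field_simp
    linear_combination (1 - Real.sqrt x ^ 2 * x) * hxx
  have h3 : Real.sqrt (2 * Real.pi * x ^ 3) = Real.sqrt (2 * Real.pi) * (x * Real.sqrt x) := by
    rw [show 2 * Real.pi * x ^ 3 = (2 * Real.pi) * (x ^ 2 * x) by ring,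
      Real.sqrt_mul (by positivity : (0:ℝ) ≤ 2 * Real.pi) (x ^ 2 * x),
      Real.sqrt_mul (by positivity : (0:ℝ) ≤ x ^ 2) x,
      Real.sqrt_sq hx.le]
  have hsqrtpi : 0 < Real.sqrt (2 * Real.pi) := Real.sqrt_pos.2 (by positivity)
  rw [habs, hexp, fIG, h3]
  field_simp


lemma final_gauss (n m : ℕ) :
    ∫ z : ℝ, (Hr n).eval z * (Hr m).eval z * Gs z / Real.sqrt (2 * Real.pi) =
      if n = m then (n.factorial : ℝ) else 0 := by
  rw [integral_div, gauss_orth n m,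
    mul_div_assoc, div_self (ne_of_gt (Real.sqrt_pos.2 (by positivity))), mul_one]

end IGaux

/-- Lemma 2, orthogonality: the functions `G_n = He_n ∘ φ_σ` are
orthogonal with respect to the weight `f_IG(x|σ,σ)(1+x)/2` on `(0,∞)`, with
`∫ G_n G_m · weight = n!` if `n = m` and `0` otherwise. -/
theorem ig_hermite_orthogonality (σ : ℝ) (hσ : 0 < σ) (n m : ℕ) :
    ∫ x in Set.Ioi (0 : ℝ),
        Polynomial.aeval (phiMap σ x) (Polynomial.hermite n) *
          Polynomial.aeval (phiMap σ x) (Polynomial.hermite m) *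
          fIG σ σ x * ((1 + x) / 2) =
      if n = m then (Nat.factorial n : ℝ) else 0 := by
  have h1 : EqOn
      (fun x => Polynomial.aeval (phiMap σ x) (Polynomial.hermite n) *
          Polynomial.aeval (phiMap σ x) (Polynomial.hermite m) *
          fIG σ σ x * ((1 + x) / 2))
      (fun x => |σ * ((1 + x) / (2 * x * Real.sqrt x))| •
          ((IGaux.Hr n).eval (phiMap σ x) * (IGaux.Hr m).eval (phiMap σ x) *
            IGaux.Gs (phiMap σ x) / Real.sqrt (2 * Real.pi)))
      (Ioi (0 : ℝ)) := by
    intro x hx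
    have hx0 : (0:ℝ) < x := hx
    have hw := IGaux.weight_eq hσ hx0
    simp only [smul_eq_mul, IGaux.aeval_hermite_eq]
    calc (IGaux.Hr n).eval (phiMap σ x) * (IGaux.Hr m).eval (phiMap σ x) *
            fIG σ σ x * ((1 + x) / 2)
        = (IGaux.Hr n).eval (phiMap σ x) * (IGaux.Hr m).eval (phiMap σ x) *
            (fIG σ σ x * ((1 + x) / 2)) := by ring
      _ = (IGaux.Hr n).eval (phiMap σ x) * (IGaux.Hr m).eval (phiMap σ x) *
            (|σ * ((1 + x) / (2 * x * Real.sqrt x))| *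
              (IGaux.Gs (phiMap σ x) / Real.sqrt (2 * Real.pi))) := by rw [hw]
      _ = _ := by ring
  rw [MeasureTheory.setIntegral_congr_fun measurableSet_Ioi h1,
    ← MeasureTheory.integral_image_eq_integral_abs_deriv_smul measurableSet_Ioi
      (fun x hx => (IGaux.phi_hasDeriv σ (mem_Ioi.mp hx)).hasDerivWithinAt)
      ((IGaux.phi_strictMono hσ).injOn)
      (fun z => (IGaux.Hr n).eval z * (IGaux.Hr m).eval z * IGaux.Gs z / Real.sqrt (2 * Real.pi)),
    IGaux.phi_image hσ, MeasureTheory.setIntegral_univ]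
  exact IGaux.final_gauss n m
end

section
/- (GH density as a normal variance-mean mixture) For all μ ∈ ℝ, β ∈ ℝ, γ, δ > 0, p ∈ ℝ, setting α = √(β² + γ²), for every y ∈ ℝ one has ∫₀^∞ (1/√(2πx)) · exp(−(y − μ − βx)²/(2x)) · f_GIG(x|γ,δ,p) dx = f_GH(y|μ,β,γ,δ,p), where f_GH(y|μ,β,γ,δ,p) = (√α · (γ/(αδ))^p / (√(2π)·K_p(δγ))) · e^{β(y−μ)} · K_{p−1/2}(α·√(δ² + (y−μ)²)) / (δ² + (y−μ)²)^{(1−2p)/4}. -/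
open MeasureTheory Real Set

private lemma bessel_int (q a b : ℝ) (ha : 0 < a) (hb : 0 < b) :
    (∫ x in Ioi (0:ℝ), x ^ (q - 1) * Real.exp (-(a ^ 2 * x + b ^ 2 / x) / 2))
      = 2 * (b / a) ^ q * besselK q (a * b) := by
  have hc : 0 < b / a := div_pos hb ha
  have h := integral_comp_mul_left_Ioi
    (fun x => x ^ (q - 1) * Real.exp (-(a ^ 2 * x + b ^ 2 / x) / 2)) 0 hc
  simp only [mul_zero, smul_eq_mul] at h
  have h2 : (∫ x in Ioi (0:ℝ), x ^ (q - 1) * Real.exp (-(a ^ 2 * x + b ^ 2 / x) / 2))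
      = (b / a) * ∫ x in Ioi (0:ℝ),
          (b / a * x) ^ (q - 1) * Real.exp (-(a ^ 2 * (b / a * x) + b ^ 2 / (b / a * x)) / 2) := by
    rw [h, ← mul_assoc, mul_inv_cancel₀ hc.ne', one_mul]
  rw [h2]
  have h3 : ∀ x ∈ Ioi (0:ℝ),
      (b / a * x) ^ (q - 1) * Real.exp (-(a ^ 2 * (b / a * x) + b ^ 2 / (b / a * x)) / 2)
        = (b / a) ^ (q - 1) * (x ^ (q - 1) * Real.exp (-(a * b) * (x + 1 / x) / 2)) := by
    intro x hx
    rw [mem_Ioi] at hx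
    rw [Real.mul_rpow hc.le hx.le]
    have : -(a ^ 2 * (b / a * x) + b ^ 2 / (b / a * x)) / 2 = -(a * b) * (x + 1 / x) / 2 := by
      field_simp
    rw [this]
    ring
  rw [setIntegral_congr_fun measurableSet_Ioi h3, integral_const_mul]
  have h4 : (∫ x in Ioi (0:ℝ), x ^ (q - 1) * Real.exp (-(a * b) * (x + 1 / x) / 2))
      = 2 * besselK q (a * b) := by
    rw [besselK]; ring
  rw [h4]
  have h5 : (b / a) * (b / a) ^ (q - 1) = (b / a) ^ q := by
    nth_rewrite 1 [← Real.rpow_one (b / a)]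
    rw [← Real.rpow_add hc]
    norm_num
  calc (b / a) * ((b / a) ^ (q - 1) * (2 * besselK q (a * b)))
      = (b / a) * (b / a) ^ (q - 1) * (2 * besselK q (a * b)) := by ring
    _ = 2 * (b / a) ^ q * besselK q (a * b) := by rw [h5]; ring

private lemma integrand_eq (μ β γ δ p y x : ℝ) (hx : 0 < x) :
    1 / Real.sqrt (2 * Real.pi * x) * Real.exp (-(y - μ - β * x) ^ 2 / (2 * x)) * fGIG γ δ p x
      = (γ / δ) ^ p * Real.exp (β * (y - μ)) / (2 * besselK p (γ * δ) * Real.sqrt (2 * Real.pi))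
        * (x ^ (p - 1/2 - 1) *
            Real.exp (-((β ^ 2 + γ ^ 2) * x + (δ ^ 2 + (y - μ) ^ 2) / x) / 2)) := by
  rw [fGIG]
  have h1 : Real.sqrt (2 * Real.pi * x) = Real.sqrt (2 * Real.pi) * Real.sqrt x :=
    Real.sqrt_mul (by positivity) x
  have h2 : x ^ (p - 1/2 - 1) = x ^ (p - 1) / Real.sqrt x := by
    rw [Real.sqrt_eq_rpow, ← Real.rpow_sub hx]
    congr 1
    ring
  have key : Real.exp (-(y - μ - β * x) ^ 2 / (2 * x)) * Real.exp (-(γ ^ 2 * x + δ ^ 2 / x) / 2)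
      = Real.exp (β * (y - μ)) *
          Real.exp (-((β ^ 2 + γ ^ 2) * x + (δ ^ 2 + (y - μ) ^ 2) / x) / 2) := by
    rw [← Real.exp_add, ← Real.exp_add]
    congr 1
    field_simp
    ring
  rw [h1, h2]
  linear_combination ((γ / δ) ^ p * x ^ (p - 1) /
    (2 * besselK p (γ * δ) * Real.sqrt (2 * Real.pi) * Real.sqrt x)) * key

private lemma scalar_ident (γ δ A M e B K p : ℝ) (hγ : 0 < γ) (hδ : 0 < δ)
    (hA : 0 < A) (hM : 0 < M) :
    (γ / δ) ^ p * e / (2 * K * Real.sqrt (2 * Real.pi))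
        * (2 * (Real.sqrt M / Real.sqrt A) ^ (p - 1/2) * B)
      = Real.sqrt (Real.sqrt A) * (γ / (Real.sqrt A * δ)) ^ p /
          (Real.sqrt (2 * Real.pi) * K) * e * B / M ^ ((1 - 2 * p) / 4) := by
  have h1 : (Real.sqrt M / Real.sqrt A) ^ (p - 1/2)
      = M ^ ((2 * p - 1) / 4) / A ^ ((2 * p - 1) / 4) := by
    rw [Real.sqrt_eq_rpow, Real.sqrt_eq_rpow,
      Real.div_rpow (by positivity) (by positivity),
      ← Real.rpow_mul hM.le, ← Real.rpow_mul hA.le,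
      show (1/(2:ℝ)) * (p - 1/2) = (2 * p - 1) / 4 by ring]
  have h2 : Real.sqrt (Real.sqrt A) * (γ / (Real.sqrt A * δ)) ^ p
      = (A ^ ((2 * p - 1) / 4))⁻¹ * (γ / δ) ^ p := by
    have hq : γ / (Real.sqrt A * δ) = (γ / δ) * A ^ (-(1/2) : ℝ) := by
      rw [Real.rpow_neg hA.le, ← Real.sqrt_eq_rpow]
      field_simp
    rw [hq, Real.mul_rpow (by positivity) (by positivity),
      Real.sqrt_eq_rpow, Real.sqrt_eq_rpow, ← Real.rpow_mul hA.le,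
      ← Real.rpow_mul hA.le, ← Real.rpow_neg hA.le]
    have h : A ^ ((1/(2:ℝ)) * (1/2)) * A ^ (-(1/2) * p) = A ^ (-((2 * p - 1) / 4)) := by
      rw [← Real.rpow_add hA]
      congr 1
      ring
    linear_combination (γ / δ) ^ p * h
  have h3 : M ^ ((1 - 2 * p) / 4) = (M ^ ((2 * p - 1) / 4))⁻¹ := by
    rw [← Real.rpow_neg hM.le]
    congr 1
    ring
  rw [h1, h2, h3]
  simp only [div_eq_mul_inv, inv_inv]
  ring

/-- GH density as a normal variance-mean mixture:
`∫₀^∞ (1/√(2πx)) exp(−(y−μ−βx)²/(2x)) f_GIG(x|γ,δ,p) dx = f_GH(y|μ,β,γ,δ,p)`. -/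
theorem gh_density_mixture (μ β γ δ p : ℝ) (hγ : 0 < γ) (hδ : 0 < δ) (y : ℝ) :
    ∫ x in Set.Ioi (0 : ℝ),
        1 / Real.sqrt (2 * Real.pi * x) * Real.exp (-(y - μ - β * x) ^ 2 / (2 * x)) *
          fGIG γ δ p x =
      fGH μ β γ δ p y := by
  have hA0 : (0:ℝ) < β ^ 2 + γ ^ 2 := by positivity
  have hM0 : (0:ℝ) < δ ^ 2 + (y - μ) ^ 2 := by positivity
  have hα : 0 < Real.sqrt (β ^ 2 + γ ^ 2) := Real.sqrt_pos.mpr hA0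
  have hm : 0 < Real.sqrt (δ ^ 2 + (y - μ) ^ 2) := Real.sqrt_pos.mpr hM0
  rw [setIntegral_congr_fun measurableSet_Ioi
    (fun x hx => integrand_eq μ β γ δ p y x hx), integral_const_mul]
  have hkey := bessel_int (p - 1/2) (Real.sqrt (β ^ 2 + γ ^ 2))
    (Real.sqrt (δ ^ 2 + (y - μ) ^ 2)) hα hm
  simp only [Real.sq_sqrt hA0.le, Real.sq_sqrt hM0.le] at hkey
  rw [hkey, fGH, show δ * γ = γ * δ from mul_comm δ γ]
  exact scalar_ident γ δ (β ^ 2 + γ ^ 2) (δ ^ 2 + (y - μ) ^ 2) (Real.exp (β * (y - μ)))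
    (besselK (p - 1/2) (Real.sqrt (β ^ 2 + γ ^ 2) * Real.sqrt (δ ^ 2 + (y - μ) ^ 2)))
    (besselK p (γ * δ)) p hγ hδ hA0 hM0
end

section
/- (GH cumulative distribution as a normal-CDF mixture) For all μ ∈ ℝ, β ∈ ℝ, γ, δ > 0, p ∈ ℝ, and every y ∈ ℝ, ∫_{−∞}^{y} f_GH(u|μ,β,γ,δ,p) du = ∫₀^∞ N((y − μ)/√x − β·√x) · f_GIG(x|γ,δ,p) dx, where N denotes the standard normal cumulative distribution function. -/
open MeasureTheory Real Set

section AuxLemmas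

open MeasureTheory Real Set

lemma aux_pow_mul_exp_neg_le {x : ℝ} (hx : 0 ≤ x) (n : ℕ) :
    x ^ n * Real.exp (-x) ≤ (n.factorial : ℝ) := by
  have h1 : x ^ n / n.factorial ≤ Real.exp x := by
    calc x ^ n / n.factorial ≤ ∑ i ∈ Finset.range (n+1), x ^ i / i.factorial := by
          refine Finset.single_le_sum (f := fun i => x ^ i / i.factorial)
            (fun i _ => by positivity) ?_
          simp
      _ ≤ Real.exp x := Real.sum_le_exp_of_nonneg hx _
  have hfac : (0:ℝ) < n.factorial := by positivity
  rw [Real.exp_neg, mul_inv_le_iff₀ (Real.exp_pos x)]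
  calc x ^ n ≤ Real.exp x * n.factorial := by rw [div_le_iff₀ hfac] at h1; linarith
    _ = (n.factorial : ℝ) * Real.exp x := by ring

lemma aux_besselIntegrand_meas (s z : ℝ) :
    Measurable (fun t : ℝ => t ^ s * Real.exp (-z * (t + 1/t) / 2)) := by
  fun_prop

lemma aux_besselIntegrand_integrableOn {z : ℝ} (hz : 0 < z) (s : ℝ) :
    IntegrableOn (fun t : ℝ => t ^ s * Real.exp (-z * (t + 1/t) / 2)) (Ioi 0) := by
  have hmeas := aux_besselIntegrand_meas s z
  have h01 : IntegrableOn (fun t : ℝ => t ^ s * Real.exp (-z * (t + 1/t) / 2)) (Ioc 0 1) := by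
    set n : ℕ := ⌈|s|⌉₊ + 1 with hn
    have hsn : -1 < s + n := by
      have h1 : -s ≤ |s| := neg_le_abs s
      have h2 : (|s| : ℝ) ≤ ⌈|s|⌉₊ := Nat.le_ceil _
      push_cast [hn]; linarith
    have hbnd : IntegrableOn (fun t : ℝ => (n.factorial : ℝ) * (2/z)^n * t ^ (s + n)) (Ioc 0 1) := by
      refine Integrable.const_mul ?_ _
      have h := intervalIntegral.intervalIntegrable_rpow' hsn (a := 0) (b := 1)
      rwa [intervalIntegrable_iff_integrableOn_Ioc_of_le zero_le_one] at h
    refine hbnd.mono' hmeas.aestronglyMeasurable.restrict ?_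
    filter_upwards [ae_restrict_mem measurableSet_Ioc] with t ht
    obtain ⟨ht0, ht1⟩ := ht
    have hx : 0 < z / (2*t) := by positivity
    rw [Real.norm_eq_abs, abs_mul, abs_of_nonneg (Real.rpow_nonneg ht0.le s),
      abs_of_nonneg (Real.exp_pos _).le]
    have key : -z * (t + 1/t) / 2 = -(z/(2*t)) + -(z*t/2) := by field_simp; ring
    have e1 : Real.exp (-z * (t + 1/t) / 2) ≤ Real.exp (-(z/(2*t))) := by
      rw [key, Real.exp_add]
      nth_rewrite 2 [← mul_one (Real.exp (-(z/(2*t))))]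
      refine mul_le_mul_of_nonneg_left ?_ (Real.exp_pos _).le
      exact Real.exp_le_one_iff.2 (by nlinarith)
    have e2 : Real.exp (-(z/(2*t))) ≤ (n.factorial : ℝ) * (2*t/z)^n := by
      have hp := aux_pow_mul_exp_neg_le hx.le n
      have hxn : 0 < (z/(2*t))^n := by positivity
      rw [← le_div_iff₀' hxn] at hp
      calc Real.exp (-(z/(2*t))) ≤ (n.factorial : ℝ) / (z/(2*t))^n := hp
        _ = (n.factorial : ℝ) * (2*t/z)^n := by
            rw [div_eq_mul_inv, ← inv_pow, ← one_div, one_div_div]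
    calc t ^ s * Real.exp (-z * (t + 1/t) / 2) ≤ t ^ s * ((n.factorial : ℝ) * (2*t/z)^n) :=
          mul_le_mul_of_nonneg_left (e1.trans e2) (Real.rpow_nonneg ht0.le s)
      _ = (n.factorial : ℝ) * (2/z)^n * t ^ (s + n) := by
          rw [Real.rpow_add ht0, Real.rpow_natCast]
          have : (2*t/z)^n = (2/z)^n * t^n := by
            rw [← mul_pow]; congr 1; field_simp
          rw [this]; ring
  have h1i : IntegrableOn (fun t : ℝ => t ^ s * Real.exp (-z * (t + 1/t) / 2)) (Ioi 1) := by
    set n : ℕ := ⌈s⌉₊ with hn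
    have hbnd : IntegrableOn (fun t : ℝ => t ^ (n:ℝ) * Real.exp (-(z/2) * t)) (Ioi 1) := by
      have h := integrableOn_rpow_mul_exp_neg_mul_rpow (p := 1) (s := (n:ℝ)) (b := z/2)
        (lt_of_lt_of_le neg_one_lt_zero (Nat.cast_nonneg n)) zero_lt_one (by positivity)
      have h2 := h.mono_set (Ioi_subset_Ioi zero_le_one)
      simpa [Real.rpow_one] using h2
    refine hbnd.mono' hmeas.aestronglyMeasurable.restrict ?_
    filter_upwards [ae_restrict_mem measurableSet_Ioi] with t ht
    have ht0 : (0:ℝ) < t := lt_trans zero_lt_one ht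
    rw [Real.norm_eq_abs, abs_mul, abs_of_nonneg (Real.rpow_nonneg ht0.le s),
      abs_of_nonneg (Real.exp_pos _).le]
    have e1 : t ^ s ≤ t ^ (n:ℝ) :=
      Real.rpow_le_rpow_of_exponent_le ht.le (Nat.le_ceil s)
    have e2 : Real.exp (-z * (t + 1/t) / 2) ≤ Real.exp (-(z/2) * t) := by
      apply Real.exp_le_exp.2
      have h3 : 0 < 1/t := by positivity
      nlinarith
    exact mul_le_mul e1 e2 (Real.exp_pos _).le (Real.rpow_nonneg ht0.le _)
  have hsplit : Ioi (0:ℝ) = Ioc 0 1 ∪ Ioi 1 := (Ioc_union_Ioi_eq_Ioi zero_le_one).symm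
  rw [hsplit]
  exact h01.union h1i

lemma aux_integral_comp_affine_Iic (f : ℝ → ℝ) {s : ℝ} (hs : 0 < s) (m y : ℝ) :
    (∫ u in Iic y, f ((u - m) / s)) = s * ∫ t in Iic ((y - m) / s), f t := by
  have h1 : (∫ u in Iic y, f ((u - m) / s))
      = ∫ u, (Iic y).indicator (fun u => f ((u - m)/s)) u :=
    (integral_indicator measurableSet_Iic).symm
  have h2 : (∫ t in Iic ((y-m)/s), f t) = ∫ t, (Iic ((y-m)/s)).indicator f t :=
    (integral_indicator measurableSet_Iic).symm
  rw [h1, h2]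
  have h4 : (∫ w, (Iic y).indicator (fun u => f ((u-m)/s)) (w + m))
      = ∫ u, (Iic y).indicator (fun u => f ((u-m)/s)) u :=
    integral_add_right_eq_self _ m
  have h3 := MeasureTheory.Measure.integral_comp_mul_left
    (fun w => (Iic y).indicator (fun u => f ((u - m)/s)) (w + m)) s
  have h5 : (fun t => (Iic y).indicator (fun u => f ((u-m)/s)) (s * t + m))
      = (Iic ((y-m)/s)).indicator f := by
    funext t
    have hmem : s * t + m ∈ Iic y ↔ t ∈ Iic ((y-m)/s) := by
      simp only [mem_Iic]
      rw [le_div_iff₀ hs]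
      constructor <;> intro h <;> nlinarith
    by_cases h : t ∈ Iic ((y-m)/s)
    · rw [indicator_of_mem (hmem.2 h), indicator_of_mem h]
      congr 1
      field_simp
      ring
    · rw [indicator_of_notMem (fun hc => h (hmem.1 hc)), indicator_of_notMem h]
  rw [h5] at h3
  rw [← h4, h3, smul_eq_mul, abs_of_pos (inv_pos.2 hs)]
  rw [← mul_assoc, mul_inv_cancel₀ hs.ne', one_mul]

lemma aux_cdf_slice (m : ℝ) {x : ℝ} (hx : 0 < x) (y : ℝ) :
    (∫ u in Iic y, Real.exp (-(u - m)^2 / (2*x)) / Real.sqrt (2*Real.pi*x))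
      = stdNormalCDF ((y - m) / Real.sqrt x) := by
  have hsx : (0:ℝ) < Real.sqrt x := Real.sqrt_pos.2 hx
  have hs2π : (0:ℝ) < Real.sqrt (2*Real.pi) := Real.sqrt_pos.2 (by positivity)
  have hpt : (fun u => Real.exp (-(u - m)^2 / (2*x)) / Real.sqrt (2*Real.pi*x))
      = fun u => stdNormalPdf ((u - m)/Real.sqrt x) * (Real.sqrt x)⁻¹ := by
    funext u
    unfold stdNormalPdf
    rw [show -((u - m)/Real.sqrt x)^2/2 = -(u-m)^2/(2*x) from by
      rw [div_pow, Real.sq_sqrt hx.le]; ring]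
    rw [Real.sqrt_mul (by positivity) x]
    field_simp
  rw [hpt, integral_mul_const, aux_integral_comp_affine_Iic stdNormalPdf hsx m y]
  rw [stdNormalCDF]
  field_simp

lemma aux_gauss_shift_integrable {x : ℝ} (hx : 0 < x) (m : ℝ) :
    Integrable (fun u : ℝ => Real.exp (-(u - m)^2 / (2*x))) := by
  have hb : (0:ℝ) < 1/(2*x) := by positivity
  have h := (integrable_exp_neg_mul_sq hb).comp_sub_right m
  have he : (fun u : ℝ => Real.exp (-(1/(2*x)) * (u - m)^2))
      = fun u : ℝ => Real.exp (-(u - m)^2 / (2*x)) := by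
    funext u; congr 1; ring
  rwa [he] at h

lemma aux_gauss_shift_integral {x : ℝ} (hx : 0 < x) (m : ℝ) :
    (∫ u : ℝ, Real.exp (-(u - m)^2 / (2*x))) = Real.sqrt (2*Real.pi*x) := by
  have hb : (0:ℝ) < 1/(2*x) := by positivity
  have h1 : (fun u : ℝ => Real.exp (-(u - m)^2 / (2*x)))
      = fun u : ℝ => Real.exp (-(1/(2*x)) * (u - m)^2) := by
    funext u; congr 1; ring
  rw [h1]
  rw [integral_sub_right_eq_self (fun u : ℝ => Real.exp (-(1/(2*x)) * u^2)) m]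
  rw [integral_gaussian]
  congr 1
  field_simp

lemma aux_const_identity {A Q g d : ℝ} (hA : 0 < A) (hQ : 0 < Q) (hg : 0 < g) (hd : 0 < d)
    (p : ℝ) :
    (g/d)^p * (Real.sqrt Q / Real.sqrt A)^(p - 1/2)
      = Real.sqrt (Real.sqrt A) * (g/(Real.sqrt A * d))^p / Q^((1-2*p)/4) := by
  have hsA : (0:ℝ) < Real.sqrt A := Real.sqrt_pos.2 hA
  have hsQ : (0:ℝ) < Real.sqrt Q := Real.sqrt_pos.2 hQ
  have hssA : (0:ℝ) < Real.sqrt (Real.sqrt A) := Real.sqrt_pos.2 hsA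
  rw [Real.rpow_def_of_pos (div_pos hg hd), Real.rpow_def_of_pos (div_pos hsQ hsA),
    Real.rpow_def_of_pos (div_pos hg (mul_pos hsA hd)), Real.rpow_def_of_pos hQ,
    ← Real.exp_log hssA]
  rw [Real.log_div hg.ne' hd.ne', Real.log_div hsQ.ne' hsA.ne',
    Real.log_div hg.ne' (mul_pos hsA hd).ne', Real.log_mul hsA.ne' hd.ne',
    Real.log_sqrt (Real.sqrt_nonneg A), Real.log_sqrt hA.le, Real.log_sqrt hQ.le]
  rw [← Real.exp_add, ← Real.exp_add, ← Real.exp_sub]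
  congr 1
  ring

lemma aux_besselK_nonneg (p : ℝ) {z : ℝ} (hz : 0 < z) : 0 ≤ besselK p z := by
  rw [besselK]
  refine mul_nonneg (by norm_num) (setIntegral_nonneg measurableSet_Ioi fun t ht => ?_)
  exact mul_nonneg (Real.rpow_nonneg (le_of_lt ht) _) (Real.exp_pos _).le

lemma aux_fGIG_nonneg {γ δ : ℝ} (p : ℝ) (hγ : 0 < γ) (hδ : 0 < δ) {x : ℝ} (hx : 0 < x) :
    0 ≤ fGIG γ δ p x := by
  rw [fGIG]
  have h1 : (0:ℝ) ≤ (γ/δ)^p := Real.rpow_nonneg (by positivity) _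
  have h2 : (0:ℝ) ≤ x^(p-1) := Real.rpow_nonneg hx.le _
  have h3 : (0:ℝ) ≤ 2 * besselK p (γ*δ) := by
    have := aux_besselK_nonneg p (mul_pos hγ hδ)
    linarith
  exact mul_nonneg (div_nonneg (mul_nonneg h1 h2) h3) (Real.exp_pos _).le

lemma aux_fGIG_meas (γ δ p : ℝ) : Measurable (fGIG γ δ p) := by
  unfold fGIG
  fun_prop

lemma aux_fGIG_integrableOn {γ δ : ℝ} (p : ℝ) (hγ : 0 < γ) (hδ : 0 < δ) :
    IntegrableOn (fGIG γ δ p) (Ioi 0) := by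
  set m : ℝ := min (γ^2) (δ^2) with hm_def
  have hm : 0 < m := lt_min (by positivity) (by positivity)
  set C : ℝ := (γ/δ)^p / (2 * besselK p (γ*δ)) with hC_def
  have hC : 0 ≤ C := by
    refine div_nonneg (Real.rpow_nonneg (by positivity) _) ?_
    have := aux_besselK_nonneg p (mul_pos hγ hδ)
    linarith
  have hbnd := (aux_besselIntegrand_integrableOn hm (p-1)).const_mul C
  refine hbnd.mono' (aux_fGIG_meas γ δ p).aestronglyMeasurable.restrict ?_
  filter_upwards [ae_restrict_mem measurableSet_Ioi] with x hx
  have hx0 : (0:ℝ) < x := hx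
  rw [Real.norm_of_nonneg (aux_fGIG_nonneg p hγ hδ hx0)]
  rw [fGIG]
  have heq : (γ/δ)^p * x^(p-1) / (2 * besselK p (γ*δ)) * Real.exp (-(γ^2*x + δ^2/x)/2)
      = C * x^(p-1) * Real.exp (-(γ^2*x + δ^2/x)/2) := by rw [hC_def]; ring
  rw [heq]
  have e1 : Real.exp (-(γ^2*x + δ^2/x)/2) ≤ Real.exp (-m * (x + 1/x) / 2) := by
    apply Real.exp_le_exp.2
    have h1 : m ≤ γ^2 := min_le_left _ _
    have h2 : m ≤ δ^2 := min_le_right _ _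
    have h3 : 0 < 1/x := by positivity
    have h4 : m * (1/x) ≤ δ^2 * (1/x) := by nlinarith
    have h5 : δ^2 * (1/x) = δ^2 / x := by ring
    nlinarith
  calc C * x^(p-1) * Real.exp (-(γ^2*x + δ^2/x)/2)
      ≤ C * x^(p-1) * Real.exp (-m * (x + 1/x) / 2) := by
        refine mul_le_mul_of_nonneg_left e1 ?_
        exact mul_nonneg hC (Real.rpow_nonneg hx0.le _)
    _ = C * (x^(p-1) * Real.exp (-m * (x + 1/x) / 2)) := by ring

end AuxLemmas

lemma key_mix (μ β γ δ p : ℝ) (hγ : 0 < γ) (hδ : 0 < δ) (u : ℝ) :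
    (∫ x in Ioi (0:ℝ),
        Real.exp (-(u - (μ + β*x))^2 / (2*x)) / Real.sqrt (2*Real.pi*x) * fGIG γ δ p x)
      = fGH μ β γ δ p u := by
  unfold fGH
  set A : ℝ := β^2 + γ^2 with hA_def
  set Q : ℝ := δ^2 + (u - μ)^2 with hQ_def
  have hA : 0 < A := by positivity
  have hQ : 0 < Q := by positivity
  have hsA : (0:ℝ) < Real.sqrt A := Real.sqrt_pos.2 hA
  have hsQ : (0:ℝ) < Real.sqrt Q := Real.sqrt_pos.2 hQ
  set c : ℝ := Real.sqrt Q / Real.sqrt A with hc_def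
  have hc : 0 < c := div_pos hsQ hsA
  set K1 : ℝ := (γ/δ)^p / (2 * besselK p (γ*δ)) * Real.exp (β*(u-μ)) / Real.sqrt (2*Real.pi)
    with hK1
  set f : ℝ → ℝ := fun x => x ^ (p - 3/2) * Real.exp (-(A*x + Q/x) / 2) with hf
  -- Step 1: pointwise identity of integrands on Ioi 0
  have step1 : ∀ x ∈ Ioi (0:ℝ),
      Real.exp (-(u - (μ + β*x))^2 / (2*x)) / Real.sqrt (2*Real.pi*x) * fGIG γ δ p x
        = K1 * f x := by
    intro x hx
    have hx : (0:ℝ) < x := hx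
    have hsx : (0:ℝ) < Real.sqrt x := Real.sqrt_pos.2 hx
    have hs2π : (0:ℝ) < Real.sqrt (2*Real.pi) := Real.sqrt_pos.2 (by positivity)
    unfold fGIG
    rw [show Real.sqrt (2*Real.pi*x) = Real.sqrt (2*Real.pi) * Real.sqrt x from
      Real.sqrt_mul (by positivity) x]
    rw [show (x:ℝ)^(p-1) = x^(p-3/2) * Real.sqrt x from by
      rw [Real.sqrt_eq_rpow, ← Real.rpow_add hx]; congr 1; ring]
    have hexp : Real.exp (-(u - (μ + β*x))^2 / (2*x))
        = Real.exp (β*(u-μ)) * Real.exp (-(A*x + Q/x) / 2) / Real.exp (-(γ^2*x + δ^2/x)/2) := by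
      rw [← Real.exp_add, ← Real.exp_sub]
      congr 1
      rw [hA_def, hQ_def]
      field_simp
      ring
    rw [hexp, hK1, hf]
    rcases eq_or_ne (2 * besselK p (γ*δ)) 0 with hk | hk
    · simp [hk]
    · field_simp
  rw [setIntegral_congr_fun measurableSet_Ioi step1, integral_const_mul]
  -- Step 2: change of variables x = c * t
  have sub := MeasureTheory.integral_comp_mul_left_Ioi f 0 hc
  rw [mul_zero] at sub
  have hfc : ∀ t ∈ Ioi (0:ℝ),
      f (c*t) = c^(p-3/2) * (t^(p - 1/2 - 1) * Real.exp (-(Real.sqrt A * Real.sqrt Q) * (t + 1/t) / 2)) := by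
    intro t ht
    have ht : (0:ℝ) < t := ht
    have hAc : A * c = Real.sqrt A * Real.sqrt Q := by
      rw [hc_def]
      field_simp
      have hA2 : Real.sqrt A ^ 2 = β^2 + γ^2 := by rw [Real.sq_sqrt hA.le]
      linear_combination (-1) * hA2
    have hQc : Q / c = Real.sqrt A * Real.sqrt Q := by
      rw [hc_def]
      field_simp
      have hQ2 : Real.sqrt Q ^ 2 = δ^2 + (u - μ)^2 := by rw [Real.sq_sqrt hQ.le]
      linear_combination (-1) * hQ2
    rw [hf]
    simp only
    rw [Real.mul_rpow hc.le ht.le]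
    rw [show -(A*(c*t) + Q/(c*t))/2 = -(Real.sqrt A * Real.sqrt Q) * (t + 1/t) / 2 from by
      rw [show A*(c*t) + Q/(c*t) = (A*c)*t + (Q/c)*(1/t) from by
        field_simp]
      rw [hAc, hQc]; ring]
    rw [show p - 3/2 = p - 1/2 - 1 from by ring]
    ring
  rw [setIntegral_congr_fun measurableSet_Ioi hfc, integral_const_mul] at sub
  -- besselK recognition
  have hbes : (∫ t in Ioi (0:ℝ), t^(p - 1/2 - 1) * Real.exp (-(Real.sqrt A * Real.sqrt Q) * (t + 1/t) / 2))
      = 2 * besselK (p - 1/2) (Real.sqrt A * Real.sqrt Q) := by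
    rw [besselK]; ring
  rw [hbes] at sub
  -- conclude: ∫ f = c • (c^(p-3/2) * (2 * besselK ...))
  have hInt : (∫ x in Ioi (0:ℝ), f x) = c * (c^(p-3/2) * (2 * besselK (p - 1/2) (Real.sqrt A * Real.sqrt Q))) := by
    rw [sub, smul_eq_mul, ← mul_assoc, mul_inv_cancel₀ hc.ne', one_mul]
  rw [hInt]
  have hcc : c * c^(p-3/2) = c^(p-1/2) := by
    nth_rewrite 1 [← Real.rpow_one c]
    rw [← Real.rpow_add hc]
    congr 1; ring
  rw [← mul_assoc c, hcc, hK1, mul_comm δ γ, hc_def]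
  have hci := aux_const_identity hA hQ hγ hδ p
  linear_combination (Real.exp (β*(u-μ)) * besselK (p-1/2) (Real.sqrt A * Real.sqrt Q)
    / (Real.sqrt (2*Real.pi) * besselK p (γ*δ))) * hci

/-- GH CDF as a normal-CDF mixture:
`∫_{−∞}^y f_GH(u|μ,β,γ,δ,p) du = ∫₀^∞ N((y−μ)/√x − β√x) f_GIG(x|γ,δ,p) dx`. -/
theorem gh_cdf_mixture (μ β γ δ p : ℝ) (hγ : 0 < γ) (hδ : 0 < δ) (y : ℝ) :
    ∫ u in Set.Iic y, fGH μ β γ δ p u =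
      ∫ x in Set.Ioi (0 : ℝ),
        stdNormalCDF ((y - μ) / Real.sqrt x - β * Real.sqrt x) * fGIG γ δ p x := by

  have hmeasfGIG := aux_fGIG_meas γ δ p
  have hmeas1 : Measurable (fun q : ℝ × ℝ =>
      Real.exp (-(q.1 - (μ + β*q.2))^2 / (2*q.2)) / Real.sqrt (2*Real.pi*q.2)) := by fun_prop
  set g : ℝ → ℝ → ℝ := fun u x =>
    Real.exp (-(u - (μ + β*x))^2 / (2*x)) / Real.sqrt (2*Real.pi*x) * fGIG γ δ p x with hg_def
  have hmeasg : Measurable (Function.uncurry g) := by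
    have huc : Function.uncurry g = fun q : ℝ × ℝ =>
        (Real.exp (-(q.1 - (μ + β*q.2))^2 / (2*q.2)) / Real.sqrt (2*Real.pi*q.2))
          * fGIG γ δ p q.2 := rfl
    rw [huc]
    exact hmeas1.mul (hmeasfGIG.comp measurable_snd)
  have hgnn : ∀ {x : ℝ}, 0 < x → ∀ u, 0 ≤ g u x := by
    intro x hx u
    exact mul_nonneg (div_nonneg (Real.exp_pos _).le (Real.sqrt_nonneg _))
      (aux_fGIG_nonneg p hγ hδ hx)
  have hslice_int : ∀ {x : ℝ}, 0 < x → Integrable (fun u => g u x) := by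
    intro x hx
    have h1 := (aux_gauss_shift_integrable hx (μ + β*x)).mul_const
      (fGIG γ δ p x / Real.sqrt (2*Real.pi*x))
    have he : (fun u : ℝ =>
        Real.exp (-(u - (μ + β*x))^2/(2*x)) * (fGIG γ δ p x / Real.sqrt (2*Real.pi*x)))
        = fun u => g u x := by
      funext u; rw [hg_def]; ring
    rwa [he] at h1
  have hslice_val : ∀ {x : ℝ}, 0 < x → (∫ u, g u x) = fGIG γ δ p x := by
    intro x hx
    have hs : (0:ℝ) < Real.sqrt (2*Real.pi*x) := Real.sqrt_pos.2 (by positivity)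
    have he : (fun u : ℝ => g u x) = fun u : ℝ =>
        Real.exp (-(u - (μ + β*x))^2/(2*x)) * (fGIG γ δ p x / Real.sqrt (2*Real.pi*x)) := by
      funext u; rw [hg_def]; ring
    rw [he, integral_mul_const, aux_gauss_shift_integral hx]
    field_simp
  have hswapInt : Integrable (Function.uncurry g)
      ((volume.restrict (Iic y)).prod (volume.restrict (Ioi 0))) := by
    refine ⟨hmeasg.aestronglyMeasurable, ?_⟩
    rw [hasFiniteIntegral_iff_norm]
    rw [lintegral_prod_symm _ (hmeasg.norm.ennreal_ofReal.aemeasurable)]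
    have hb : (∫⁻ x in Ioi (0:ℝ), ∫⁻ u in Iic y, ENNReal.ofReal ‖g u x‖ ∂volume ∂volume)
        ≤ ∫⁻ x in Ioi (0:ℝ), ENNReal.ofReal ‖fGIG γ δ p x‖ ∂volume := by
      refine lintegral_mono_ae ?_
      filter_upwards [ae_restrict_mem measurableSet_Ioi] with x hx
      have hx0 : (0:ℝ) < x := hx
      calc (∫⁻ u in Iic y, ENNReal.ofReal ‖g u x‖ ∂volume)
          ≤ ∫⁻ u, ENNReal.ofReal ‖g u x‖ ∂volume := setLIntegral_le_lintegral _ _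
        _ = ENNReal.ofReal (∫ u, ‖g u x‖) :=
            (ofReal_integral_eq_lintegral_ofReal (hslice_int hx0).norm
              (Filter.Eventually.of_forall fun u => norm_nonneg _)).symm
        _ = ENNReal.ofReal (∫ u, g u x) := by
            congr 1
            exact integral_congr_ae
              (Filter.Eventually.of_forall fun u => Real.norm_of_nonneg (hgnn hx0 u))
        _ = ENNReal.ofReal ‖fGIG γ δ p x‖ := by
            rw [hslice_val hx0, Real.norm_of_nonneg (aux_fGIG_nonneg p hγ hδ hx0)]
    refine lt_of_le_of_lt hb ?_
    have hfin := (aux_fGIG_integrableOn p hγ hδ).hasFiniteIntegral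
    rwa [hasFiniteIntegral_iff_norm] at hfin
  calc (∫ u in Iic y, fGH μ β γ δ p u)
      = ∫ u in Iic y, ∫ x in Ioi (0:ℝ), g u x := by
        refine setIntegral_congr_fun measurableSet_Iic fun u _ => ?_
        exact (key_mix μ β γ δ p hγ hδ u).symm
    _ = ∫ x in Ioi (0:ℝ), ∫ u in Iic y, g u x := integral_integral_swap hswapInt
    _ = ∫ x in Ioi (0:ℝ), stdNormalCDF ((y - μ)/Real.sqrt x - β*Real.sqrt x) * fGIG γ δ p x := by
        refine setIntegral_congr_fun measurableSet_Ioi fun x hx => ?_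
        have hx0 : (0:ℝ) < x := hx
        have hsx : (0:ℝ) < Real.sqrt x := Real.sqrt_pos.2 hx0
        have h1 : (∫ u in Iic y, g u x)
            = (∫ u in Iic y, Real.exp (-(u - (μ + β*x))^2/(2*x)) / Real.sqrt (2*Real.pi*x))
              * fGIG γ δ p x := integral_mul_const _ _
        have harg : (y - (μ + β*x))/Real.sqrt x = (y - μ)/Real.sqrt x - β*Real.sqrt x := by
          field_simp
          linear_combination β * (Real.mul_self_sqrt hx0.le)
        rw [h1, aux_cdf_slice (μ + β*x) hx0 y, harg]
end

section
/- (GH moment generating function) For all μ ∈ ℝ, β ∈ ℝ, γ, δ > 0, p ∈ ℝ, and every real t such that s := βt + t²/2 < γ²/2, one has ∫_ℝ e^{ty} · f_GH(y|μ,β,γ,δ,p) dy = e^{μt} · (γ²/(γ² − 2s))^{p/2} · K_p(δ·√(γ² − 2s)) / K_p(δγ); that is, the moment generating function of the GH distribution equals e^{μt} times the moment generating function of the GIG mixing distribution evaluated at βt + t²/2. -/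
open MeasureTheory Real Set

lemma besselInt_integrableOn {a b : ℝ} (q : ℝ) (ha : 0 < a) (hb : 0 < b) :
    IntegrableOn (fun x : ℝ => x ^ (q - 1) * Real.exp (-(a * x + b / x) / 2)) (Ioi 0) := by
  have hmeas : Measurable (fun x : ℝ => x ^ (q - 1) * Real.exp (-(a * x + b / x) / 2)) := by
    fun_prop
  have hsplit : Ioi (0:ℝ) = Ioc 0 1 ∪ Ioi 1 := (Ioc_union_Ioi_eq_Ioi zero_le_one).symm
  rw [hsplit]
  apply IntegrableOn.union
  · -- near 0
    set n : ℕ := ⌈|q|⌉₊ + 1 with hn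
    have hnq : (-q : ℝ) < (⌈|q|⌉₊ : ℝ) + 1 := by
      have h := Nat.le_ceil |q|
      nlinarith [neg_abs_le q, abs_nonneg q]
    have hint : IntegrableOn (fun x : ℝ => (n.factorial * (2/b)^n) * x ^ (q - 1 + n)) (Ioc 0 1) := by
      apply Integrable.const_mul
      have := (intervalIntegral.intervalIntegrable_rpow' (a := (0:ℝ)) (b := 1) (r := q - 1 + n) (by push_cast [hn]; linarith)).1
      exact (by simpa using this : IntegrableOn (fun x : ℝ => x ^ (q - 1 + n)) (Ioc 0 1))
    apply hint.mono' (hmeas.aestronglyMeasurable.restrict)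
    rw [ae_restrict_iff' measurableSet_Ioc]
    filter_upwards [] with x hx
    obtain ⟨hx0, hx1⟩ := hx
    have hxp : (0:ℝ) < x := hx0
    rw [Real.norm_eq_abs, abs_mul, abs_of_nonneg (Real.rpow_nonneg hxp.le _),
      abs_of_nonneg (Real.exp_pos _).le]
    have hexp : Real.exp (-(a * x + b / x) / 2) ≤ n.factorial * (2/b)^n * x ^ (n:ℝ) := by
      have hu : (0:ℝ) < b / x / 2 := by positivity
      have h1 : Real.exp (-(a * x + b / x) / 2) ≤ Real.exp (-(b / x / 2)) := by
        apply Real.exp_le_exp.2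
        have hax : 0 ≤ a * x := by positivity
        linarith
      have h2 : (b / x / 2) ^ n / n.factorial ≤ Real.exp (b / x / 2) :=
        Real.pow_div_factorial_le_exp (b/x/2) hu.le n
      have key : (b/x/2)^n ≤ n.factorial * Real.exp (b/x/2) := by
        rw [div_le_iff₀ (by positivity : (0:ℝ) < n.factorial)] at h2; linarith
      have h4 : Real.exp (-(b / x / 2)) ≤ n.factorial / (b / x / 2) ^ n := by
        rw [Real.exp_neg, le_div_iff₀ (by positivity), inv_mul_le_iff₀ (Real.exp_pos _)]
        linarith
      calc Real.exp (-(a * x + b / x) / 2) ≤ n.factorial / (b / x / 2) ^ n := h1.trans h4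
        _ = n.factorial * (2/b)^n * x ^ (n:ℝ) := by
            rw [Real.rpow_natCast, div_eq_mul_inv, ← inv_pow,
              show (b / x / 2)⁻¹ = 2 / b * x by rw [inv_div, div_div_eq_mul_div]; ring, mul_pow]
            ring
    calc x ^ (q-1) * Real.exp (-(a * x + b / x) / 2)
        ≤ x ^ (q-1) * (n.factorial * (2/b)^n * x ^ (n:ℝ)) :=
          mul_le_mul_of_nonneg_left hexp (Real.rpow_nonneg hxp.le _)
      _ = n.factorial * (2/b)^n * x ^ (q - 1 + n) := by
          rw [Real.rpow_add hxp]; ring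
  · -- near infinity
    set m : ℝ := max 0 (q - 1) with hm
    have hint : IntegrableOn (fun x : ℝ => x ^ m * Real.exp (-(a/2) * x)) (Ioi 1) := by
      apply IntegrableOn.mono_set _ (Ioi_subset_Ioi zero_le_one)
      have := integrableOn_rpow_mul_exp_neg_mul_rpow (s := m) (p := 1) (b := a/2)
        (lt_of_lt_of_le neg_one_lt_zero (le_max_left _ _)) zero_lt_one (by positivity)
      apply this.congr_fun _ measurableSet_Ioi
      intro x hx
      simp [Real.rpow_one]
    apply hint.mono' (hmeas.aestronglyMeasurable.restrict)
    rw [ae_restrict_iff' measurableSet_Ioi]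
    filter_upwards [] with x hx
    have hx1 : (1:ℝ) < x := hx
    have hxp : (0:ℝ) < x := lt_trans one_pos hx1
    rw [Real.norm_eq_abs, abs_mul, abs_of_nonneg (Real.rpow_nonneg hxp.le _),
      abs_of_nonneg (Real.exp_pos _).le]
    have h1 : x ^ (q-1) ≤ x ^ m := Real.rpow_le_rpow_of_exponent_le hx1.le (le_max_right _ _)
    have h2 : Real.exp (-(a * x + b / x) / 2) ≤ Real.exp (-(a/2) * x) := by
      apply Real.exp_le_exp.2
      have : 0 ≤ b / x := by positivity
      nlinarith
    calc x ^ (q-1) * Real.exp (-(a * x + b / x) / 2)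
        ≤ x ^ m * Real.exp (-(a/2)*x) :=
          mul_le_mul h1 h2 (Real.exp_pos _).le (Real.rpow_nonneg hxp.le _)
      _ = _ := rfl

lemma besselK_integrand_eq (q z : ℝ) :
    (fun t : ℝ => t ^ (q - 1) * Real.exp (-z * (t + 1 / t) / 2)) =
      fun t : ℝ => t ^ (q - 1) * Real.exp (-(z * t + z / t) / 2) := by
  funext t
  congr 2
  ring

lemma besselK_integrableOn {z : ℝ} (q : ℝ) (hz : 0 < z) :
    IntegrableOn (fun t : ℝ => t ^ (q - 1) * Real.exp (-z * (t + 1 / t) / 2)) (Ioi 0) := by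
  rw [besselK_integrand_eq]
  exact besselInt_integrableOn q hz hz

lemma besselK_pos (q : ℝ) {z : ℝ} (hz : 0 < z) : 0 < besselK q z := by
  rw [besselK]
  have h : 0 < ∫ t in Ioi (0:ℝ), t ^ (q - 1) * Real.exp (-z * (t + 1 / t) / 2) := by
    rw [setIntegral_pos_iff_support_of_nonneg_ae _ (besselK_integrableOn q hz)]
    · have hsub : Ioi (0:ℝ) ⊆ Function.support
          (fun t : ℝ => t ^ (q - 1) * Real.exp (-z * (t + 1 / t) / 2)) := by
        intro t ht
        have : 0 < t ^ (q - 1) * Real.exp (-z * (t + 1 / t) / 2) :=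
          mul_pos (Real.rpow_pos_of_pos ht _) (Real.exp_pos _)
        exact this.ne'
      rw [inter_eq_right.mpr hsub]
      simp
    · rw [Filter.EventuallyLE, ae_restrict_iff' measurableSet_Ioi]
      filter_upwards [] with t ht
      have : (0:ℝ) < t := ht
      positivity
  positivity

lemma besselInt_eq {a b : ℝ} (q : ℝ) (ha : 0 < a) (hb : 0 < b) :
    ∫ x in Ioi (0:ℝ), x ^ (q - 1) * Real.exp (-(a * x + b / x) / 2) =
      2 * Real.sqrt (b / a) ^ q * besselK q (Real.sqrt (a * b)) := by
  set c : ℝ := Real.sqrt (b / a) with hc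
  have hcpos : 0 < c := Real.sqrt_pos.2 (by positivity)
  set z : ℝ := Real.sqrt (a * b) with hz
  have hzpos : 0 < z := Real.sqrt_pos.2 (by positivity)
  have hac : z = a * c := by
    rw [hz, hc, show a * b = a^2 * (b/a) by field_simp,
      Real.sqrt_mul (sq_nonneg a), Real.sqrt_sq ha.le]
  have hbc : z = b / c := by
    rw [hz, hc, show a * b = b^2 / (b/a) by field_simp,
      Real.sqrt_div (sq_nonneg b), Real.sqrt_sq hb.le]
  have hsub := integral_comp_mul_left_Ioi
    (fun x : ℝ => x ^ (q - 1) * Real.exp (-(a * x + b / x) / 2)) 0 hcpos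
  rw [mul_zero] at hsub
  have hstep : ∫ t in Ioi (0:ℝ),
      (c * t) ^ (q - 1) * Real.exp (-(a * (c * t) + b / (c * t)) / 2)
      = c ^ (q - 1) * (2 * besselK q z) := by
    rw [show c ^ (q-1) * (2 * besselK q z)
        = ∫ t in Ioi (0:ℝ), c ^ (q - 1) * (t ^ (q - 1) * Real.exp (-z * (t + 1 / t) / 2)) from ?_]
    · apply setIntegral_congr_fun measurableSet_Ioi
      intro t ht
      have htp : (0:ℝ) < t := ht
      dsimp only
      rw [Real.mul_rpow hcpos.le htp.le]
      rw [mul_assoc]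
      congr 2
      rw [show a * (c * t) = z * t by rw [hac]; ring,
        show b / (c * t) = z / t by rw [hbc]; field_simp]
      ring
    · rw [integral_const_mul, besselK]
      ring
  rw [hstep] at hsub
  have hcq : c * c ^ (q-1) = c ^ q := by
    have h := Real.rpow_add hcpos 1 (q-1)
    rw [Real.rpow_one] at h
    rw [← h]
    norm_num
  rw [smul_eq_mul, eq_comm, inv_mul_eq_iff_eq_mul₀ hcpos.ne'] at hsub
  rw [hsub, ← mul_assoc, hcq]
  ring

lemma gig_tilt (γ δ p s : ℝ) (hγ : 0 < γ) (hδ : 0 < δ) (hs : s < γ ^ 2 / 2) :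
    ∫ x in Ioi (0:ℝ), fGIG γ δ p x * Real.exp (s * x) =
      (γ ^ 2 / (γ ^ 2 - 2 * s)) ^ (p / 2) * besselK p (δ * Real.sqrt (γ ^ 2 - 2 * s)) /
        besselK p (γ * δ) := by
  set A : ℝ := γ ^ 2 - 2 * s with hA
  have hApos : 0 < A := by rw [hA]; nlinarith
  have hsA : 0 < Real.sqrt A := Real.sqrt_pos.2 hApos
  have hpt : ∀ x ∈ Ioi (0:ℝ), fGIG γ δ p x * Real.exp (s * x)
      = (γ / δ) ^ p / (2 * besselK p (γ * δ)) *
        (x ^ (p - 1) * Real.exp (-(A * x + δ ^ 2 / x) / 2)) := by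
    intro x hx
    rw [fGIG, mul_assoc _ _ (Real.exp (s*x)), ← Real.exp_add,
      show -(γ ^ 2 * x + δ ^ 2 / x) / 2 + s * x = -(A * x + δ ^ 2 / x) / 2 by rw [hA]; ring]
    ring
  rw [setIntegral_congr_fun measurableSet_Ioi hpt, integral_const_mul,
    besselInt_eq p hApos (by positivity : (0:ℝ) < δ ^ 2)]
  have h1 : Real.sqrt (A * δ ^ 2) = δ * Real.sqrt A := by
    rw [Real.sqrt_mul hApos.le, Real.sqrt_sq hδ.le, mul_comm]
  have h2 : Real.sqrt (δ ^ 2 / A) = δ / Real.sqrt A := by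
    rw [Real.sqrt_div (sq_nonneg δ), Real.sqrt_sq hδ.le]
  have h3 : (γ / δ) ^ p * (δ / Real.sqrt A) ^ p = (γ / Real.sqrt A) ^ p := by
    rw [← Real.mul_rpow (by positivity) (by positivity)]
    congr 1
    field_simp
  have h4 : (γ ^ 2 / A) ^ (p / 2) = (γ / Real.sqrt A) ^ p := by
    rw [show γ ^ 2 / A = (γ / Real.sqrt A) ^ 2 by
        rw [div_pow, Real.sq_sqrt hApos.le],
      ← Real.rpow_natCast (γ / Real.sqrt A) 2, ← Real.rpow_mul (by positivity)]
    norm_num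
    congr 1
    ring
  rw [h1, h2, h4, ← h3]
  ring

lemma gauss_integrable {v : ℝ} (hv : 0 < v) (c : ℝ) :
    Integrable (fun y : ℝ => Real.exp (-(y - c) ^ 2 / (2 * v))) := by
  have h1 : Integrable (fun z : ℝ => Real.exp (-(1 / (2 * v)) * z ^ 2)) :=
    integrable_exp_neg_mul_sq (by positivity)
  have h2 := ((measurePreserving_sub_right volume c).integrable_comp
    h1.aestronglyMeasurable).2 h1
  refine h2.congr (Filter.Eventually.of_forall fun y => ?_)
  simp only [Function.comp]
  congr 1
  field_simp

lemma gauss_norm {v : ℝ} (hv : 0 < v) (c : ℝ) :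
    ∫ y : ℝ, Real.exp (-(y - c) ^ 2 / (2 * v)) = Real.sqrt (2 * Real.pi * v) := by
  have h : (fun y : ℝ => Real.exp (-(y - c) ^ 2 / (2 * v)))
      = fun y : ℝ => (fun z : ℝ => Real.exp (-(1 / (2 * v)) * z ^ 2)) (y - c) := by
    funext y
    congr 1
    field_simp
  rw [h, integral_sub_right_eq_self (fun z : ℝ => Real.exp (-(1 / (2 * v)) * z ^ 2)) c,
    integral_gaussian]
  congr 1
  field_simp

lemma gauss_pt (v m u y : ℝ) (hv : 0 < v) :
    Real.exp (u * y) * (Real.exp (-(y - m) ^ 2 / (2 * v)) / Real.sqrt (2 * Real.pi * v))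
      = Real.exp (u * m + u ^ 2 * v / 2) / Real.sqrt (2 * Real.pi * v) *
        Real.exp (-(y - (m + u * v)) ^ 2 / (2 * v)) := by
  have hcore : Real.exp (u * y) * Real.exp (-(y - m) ^ 2 / (2 * v))
      = Real.exp (u * m + u ^ 2 * v / 2) * Real.exp (-(y - (m + u * v)) ^ 2 / (2 * v)) := by
    rw [← Real.exp_add, ← Real.exp_add]
    congr 1
    field_simp
    ring
  calc Real.exp (u * y) * (Real.exp (-(y - m) ^ 2 / (2 * v)) / Real.sqrt (2 * Real.pi * v))
      = Real.exp (u * y) * Real.exp (-(y - m) ^ 2 / (2 * v)) / Real.sqrt (2 * Real.pi * v) := by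
        ring
    _ = Real.exp (u * m + u ^ 2 * v / 2) * Real.exp (-(y - (m + u * v)) ^ 2 / (2 * v)) /
        Real.sqrt (2 * Real.pi * v) := by rw [hcore]
    _ = _ := by ring

lemma gauss_mgf {v : ℝ} (hv : 0 < v) (m u : ℝ) :
    ∫ y : ℝ, Real.exp (u * y) * (Real.exp (-(y - m) ^ 2 / (2 * v)) / Real.sqrt (2 * Real.pi * v))
      = Real.exp (u * m + u ^ 2 * v / 2) := by
  have h : (fun y : ℝ => Real.exp (u * y) *
      (Real.exp (-(y - m) ^ 2 / (2 * v)) / Real.sqrt (2 * Real.pi * v)))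
      = fun y : ℝ => Real.exp (u * m + u ^ 2 * v / 2) / Real.sqrt (2 * Real.pi * v) *
        Real.exp (-(y - (m + u * v)) ^ 2 / (2 * v)) := funext fun y => gauss_pt v m u y hv
  rw [h, integral_const_mul, gauss_norm hv]
  have hsq : Real.sqrt (2 * Real.pi * v) ≠ 0 := by
    positivity
  field_simp

lemma gauss_mgf_integrable {v : ℝ} (hv : 0 < v) (m u : ℝ) :
    Integrable (fun y : ℝ => Real.exp (u * y) *
      (Real.exp (-(y - m) ^ 2 / (2 * v)) / Real.sqrt (2 * Real.pi * v))) := by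
  have h : (fun y : ℝ => Real.exp (u * y) *
      (Real.exp (-(y - m) ^ 2 / (2 * v)) / Real.sqrt (2 * Real.pi * v)))
      = fun y : ℝ => Real.exp (u * m + u ^ 2 * v / 2) / Real.sqrt (2 * Real.pi * v) *
        Real.exp (-(y - (m + u * v)) ^ 2 / (2 * v)) := funext fun y => gauss_pt v m u y hv
  rw [h]
  exact (gauss_integrable hv _).const_mul _

lemma gh_mix (μ β γ δ p y : ℝ) (hγ : 0 < γ) (hδ : 0 < δ) :
    ∫ x in Ioi (0:ℝ),
        Real.exp (-(y - (μ + β * x)) ^ 2 / (2 * x)) / Real.sqrt (2 * Real.pi * x) *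
          fGIG γ δ p x
      = fGH μ β γ δ p y := by
  set a : ℝ := Real.sqrt (β ^ 2 + γ ^ 2) with ha
  have hapos : 0 < a := Real.sqrt_pos.2 (by positivity)
  have ha2 : a ^ 2 = β ^ 2 + γ ^ 2 := Real.sq_sqrt (by positivity)
  set D : ℝ := δ ^ 2 + (y - μ) ^ 2 with hDdef
  have hD : 0 < D := by positivity
  have hK : 0 < besselK p (γ * δ) := besselK_pos p (by positivity)
  set A : ℝ := β ^ 2 + γ ^ 2 with hAdef
  have hA : 0 < A := by positivity
  have hpt : ∀ x ∈ Ioi (0:ℝ),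
      Real.exp (-(y - (μ + β * x)) ^ 2 / (2 * x)) / Real.sqrt (2 * Real.pi * x) *
        fGIG γ δ p x
      = (γ / δ) ^ p * Real.exp (β * (y - μ)) / (2 * besselK p (γ * δ) * Real.sqrt (2 * Real.pi)) *
        (x ^ (p - 1 / 2 - 1) * Real.exp (-(A * x + D / x) / 2)) := by
    intro x hx
    have hxp : (0:ℝ) < x := hx
    rw [fGIG]
    have hsq : Real.sqrt (2 * Real.pi * x) = Real.sqrt (2 * Real.pi) * x ^ (1/2 : ℝ) := by
      rw [Real.sqrt_mul (by positivity), Real.sqrt_eq_rpow x]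
    have hxpow : x ^ (p - 1) = x ^ (p - 1/2 - 1) * x ^ (1/2 : ℝ) := by
      rw [← Real.rpow_add hxp]
      congr 1
      ring
    have hexp : Real.exp (-(y - (μ + β * x)) ^ 2 / (2 * x)) *
        Real.exp (-(γ ^ 2 * x + δ ^ 2 / x) / 2)
        = Real.exp (β * (y - μ)) * Real.exp (-(A * x + D / x) / 2) := by
      rw [← Real.exp_add, ← Real.exp_add]
      congr 1
      rw [hAdef, hDdef]
      field_simp
      ring
    rw [hsq, hxpow]
    have hhalf : (0:ℝ) < x ^ (1/2:ℝ) := Real.rpow_pos_of_pos hxp _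
    calc Real.exp (-(y - (μ + β * x)) ^ 2 / (2 * x)) / (Real.sqrt (2 * Real.pi) * x ^ (1/2:ℝ)) *
          ((γ / δ) ^ p * (x ^ (p - 1/2 - 1) * x ^ (1/2:ℝ)) / (2 * besselK p (γ * δ)) *
            Real.exp (-(γ ^ 2 * x + δ ^ 2 / x) / 2))
        = (Real.exp (-(y - (μ + β * x)) ^ 2 / (2 * x)) *
            Real.exp (-(γ ^ 2 * x + δ ^ 2 / x) / 2)) *
            ((γ / δ) ^ p * x ^ (p - 1/2 - 1) /
              (2 * besselK p (γ * δ) * Real.sqrt (2 * Real.pi))) *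
            (x ^ (1/2:ℝ) / x ^ (1/2:ℝ)) := by ring
      _ = (Real.exp (β * (y - μ)) * Real.exp (-(A * x + D / x) / 2)) *
            ((γ / δ) ^ p * x ^ (p - 1/2 - 1) /
              (2 * besselK p (γ * δ) * Real.sqrt (2 * Real.pi))) * 1 := by
          rw [hexp, div_self hhalf.ne']
      _ = _ := by ring
  rw [setIntegral_congr_fun measurableSet_Ioi hpt, integral_const_mul,
    besselInt_eq (p - 1/2) hA hD]
  have h1 : Real.sqrt (A * D) = a * Real.sqrt D := by
    rw [Real.sqrt_mul hA.le, ha]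
  have h2 : Real.sqrt (D / A) = Real.sqrt D / a := by
    rw [Real.sqrt_div hD.le, ha]
  have e1 : (Real.sqrt D / a) ^ (p - 1/2) = D ^ ((2*p-1)/4) / a ^ (p - 1/2) := by
    rw [Real.div_rpow (Real.sqrt_nonneg D) hapos.le, Real.sqrt_eq_rpow, ← Real.rpow_mul hD.le]
    congr 1
    ring
  have e2 : (γ / (a * δ)) ^ p = (γ / δ) ^ p / a ^ p := by
    rw [show γ / (a * δ) = (γ / δ) / a by rw [div_div, mul_comm δ a],
      Real.div_rpow (by positivity) hapos.le]
  have e3 : Real.sqrt a = a ^ (1/2 : ℝ) := Real.sqrt_eq_rpow a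
  have e4 : a ^ (p - 1/2) = a ^ p / a ^ (1/2 : ℝ) := Real.rpow_sub hapos p (1/2)
  have e5 : D ^ ((1 - 2*p)/4) = (D ^ ((2*p-1)/4))⁻¹ := by
    rw [← Real.rpow_neg hD.le]
    congr 1
    ring
  have hKcomm : besselK p (δ * γ) = besselK p (γ * δ) := by rw [mul_comm]
  rw [fGH, ← hDdef, ← ha, h1, h2, e1, hKcomm, e2, e3, e4, e5]
  have hap : (0:ℝ) < a ^ p := Real.rpow_pos_of_pos hapos p
  have hah : (0:ℝ) < a ^ (1/2:ℝ) := Real.rpow_pos_of_pos hapos _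
  have hQ : (0:ℝ) < D ^ ((2*p-1)/4) := Real.rpow_pos_of_pos hD _
  have hS : (0:ℝ) < Real.sqrt (2 * Real.pi) := by positivity
  field_simp

lemma gig_tilt_pt (γ δ p s x : ℝ) :
    fGIG γ δ p x * Real.exp (s * x) = (γ / δ) ^ p / (2 * besselK p (γ * δ)) *
      (x ^ (p - 1) * Real.exp (-((γ ^ 2 - 2 * s) * x + δ ^ 2 / x) / 2)) := by
  rw [fGIG, mul_assoc _ _ (Real.exp (s * x)), ← Real.exp_add,
    show -(γ ^ 2 * x + δ ^ 2 / x) / 2 + s * x = -((γ ^ 2 - 2 * s) * x + δ ^ 2 / x) / 2 by ring]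
  ring

/-- GH moment generating function: for `s = βt + t²/2 < γ²/2`,
`∫_ℝ e^{ty} f_GH(y|μ,β,γ,δ,p) dy = e^{μt} (γ²/(γ²−2s))^{p/2} K_p(δ√(γ²−2s))/K_p(δγ)`. -/
theorem gh_mgf (μ β γ δ p t : ℝ) (hγ : 0 < γ) (hδ : 0 < δ)
    (ht : β * t + t ^ 2 / 2 < γ ^ 2 / 2) :
    ∫ y, Real.exp (t * y) * fGH μ β γ δ p y =
      Real.exp (μ * t) *
        (γ ^ 2 / (γ ^ 2 - 2 * (β * t + t ^ 2 / 2))) ^ (p / 2) *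
        besselK p (δ * Real.sqrt (γ ^ 2 - 2 * (β * t + t ^ 2 / 2))) /
        besselK p (δ * γ) := by
  set s : ℝ := β * t + t ^ 2 / 2 with hs
  have hApos : 0 < γ ^ 2 - 2 * s := by rw [hs]; nlinarith
  set F : ℝ → ℝ → ℝ := fun x y => Real.exp (t * y) *
      (Real.exp (-(y - (μ + β * x)) ^ 2 / (2 * x)) / Real.sqrt (2 * Real.pi * x) *
        fGIG γ δ p x) with hF
  have hKpos : 0 < besselK p (γ * δ) := besselK_pos p (by positivity)
  have hinner : ∀ x ∈ Ioi (0:ℝ),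
      ∫ y, F x y = Real.exp (t * (μ + β * x) + t ^ 2 * x / 2) * fGIG γ δ p x := by
    intro x hx
    have hxp : (0:ℝ) < x := hx
    have heq : (fun y => F x y) = fun y =>
        Real.exp (t * y) * (Real.exp (-(y - (μ + β * x)) ^ 2 / (2 * x)) /
          Real.sqrt (2 * Real.pi * x)) * fGIG γ δ p x := by
      funext y
      rw [hF]
      ring
    rw [heq, integral_mul_const, gauss_mgf hxp]
  have hnonneg : ∀ x ∈ Ioi (0:ℝ), ∀ y : ℝ, 0 ≤ F x y := by
    intro x hx y
    have hxp : (0:ℝ) < x := hx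
    have h1 : 0 ≤ fGIG γ δ p x := by
      rw [fGIG]
      apply mul_nonneg _ (Real.exp_pos _).le
      apply div_nonneg _ (by linarith)
      exact mul_nonneg (Real.rpow_nonneg (by positivity) _) (Real.rpow_nonneg hxp.le _)
    rw [hF]
    exact mul_nonneg (Real.exp_pos _).le (mul_nonneg
      (div_nonneg (Real.exp_pos _).le (Real.sqrt_nonneg _)) h1)
  have hmeas : AEStronglyMeasurable (Function.uncurry F)
      ((volume.restrict (Ioi 0)).prod volume) := by
    apply Measurable.aestronglyMeasurable
    rw [hF]
    unfold fGIG Function.uncurry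
    fun_prop
  have hint : Integrable (Function.uncurry F) ((volume.restrict (Ioi 0)).prod volume) := by
    rw [integrable_prod_iff hmeas]
    constructor
    · rw [ae_restrict_iff' measurableSet_Ioi]
      filter_upwards [] with x hx
      have hxp : (0:ℝ) < x := hx
      have heq : (fun y => Function.uncurry F (x, y)) = fun y =>
          Real.exp (t * y) * (Real.exp (-(y - (μ + β * x)) ^ 2 / (2 * x)) /
            Real.sqrt (2 * Real.pi * x)) * fGIG γ δ p x := by
        funext y
        rw [Function.uncurry, hF]
        ring
      rw [heq]
      exact (gauss_mgf_integrable hxp (μ + β * x) t).mul_const _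
    · have hg : IntegrableOn (fun x => Real.exp (μ * t) * ((γ / δ) ^ p /
          (2 * besselK p (γ * δ)) *
          (x ^ (p - 1) * Real.exp (-((γ ^ 2 - 2 * s) * x + δ ^ 2 / x) / 2)))) (Ioi 0) := by
        have hb := besselInt_integrableOn p hApos (show (0:ℝ) < δ ^ 2 by positivity)
        exact (hb.const_mul _).const_mul _
      apply hg.congr
      rw [Filter.eventuallyEq_iff_exists_mem]
      refine ⟨Ioi 0, self_mem_ae_restrict measurableSet_Ioi, fun x hx => ?_⟩
      have hxp : (0:ℝ) < x := hx
      have hnorm : (fun y => ‖Function.uncurry F (x, y)‖) = fun y => F x y := by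
        funext y
        rw [Function.uncurry, Real.norm_eq_abs, abs_of_nonneg (hnonneg x hx y)]
      dsimp only
      rw [hnorm, hinner x hx,
        show t * (μ + β * x) + t ^ 2 * x / 2 = μ * t + s * x by rw [hs]; ring,
        Real.exp_add, mul_assoc, mul_comm (Real.exp (s * x)), gig_tilt_pt]
  calc ∫ y, Real.exp (t * y) * fGH μ β γ δ p y
      = ∫ y, ∫ x in Ioi (0:ℝ), F x y := by
        congr 1
        funext y
        rw [← gh_mix μ β γ δ p y hγ hδ, ← integral_const_mul]
    _ = ∫ x in Ioi (0:ℝ), ∫ y, F x y := (integral_integral_swap hint).symm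
    _ = ∫ x in Ioi (0:ℝ), Real.exp (t * (μ + β * x) + t ^ 2 * x / 2) * fGIG γ δ p x :=
        setIntegral_congr_fun measurableSet_Ioi hinner
    _ = ∫ x in Ioi (0:ℝ), Real.exp (μ * t) * (fGIG γ δ p x * Real.exp (s * x)) := by
        apply setIntegral_congr_fun measurableSet_Ioi
        intro x hx
        dsimp only
        rw [show t * (μ + β * x) + t ^ 2 * x / 2 = μ * t + s * x by rw [hs]; ring,
          Real.exp_add]
        ring
    _ = Real.exp (μ * t) * ∫ x in Ioi (0:ℝ), fGIG γ δ p x * Real.exp (s * x) :=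
        integral_const_mul _ _
    _ = _ := by
        rw [gig_tilt γ δ p s hγ hδ (by rw [hs]; exact ht),
          show besselK p (γ * δ) = besselK p (δ * γ) by rw [mul_comm]]
        ring
end
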